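/- Completeness of the combined transformations with respect to E-interpretations: for every clause set M and every transformation tr in {rr, sh∘rr, crr, sh∘crr} ∪ {π∘τ : π ∈ {rr, sh∘rr, crr, sh∘crr}, τ ∈ {blsd, blsp, blud, blup}} (composition read left-to-right, e.g. (sh∘rr∘blud)(M) = blud(rr(sh(M)))), if tr(M) ∪ {x ≈ x ← dom(x)} is E-satisfiable then M is E-satisfiable. Moreover the converse (soundness) holds: if M is E-satisfiable then tr(M) ∪ {x ≈ x ← dom(x)} is E-satisfiable. -/

import Mathlib

namespace BUMG

/-- First-order terms over function symbols `F`, with variables indexed by `ℕ`. -/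
inductive Term (F : Type) : Type where
  | var : ℕ → Term F
  | app : F → List (Term F) → Term F

namespace Term
variable {F : Type}

/-- The list of variables occurring in a term. -/
def vars : Term F → List ℕ
  | var n => [n]
  | app _ ts => ts.attach.flatMap (fun t => vars t.1)
decreasing_by simp_wf; have := List.sizeOf_lt_of_mem t.2; omega

/-- The function symbols (with the arity of the occurrence) occurring in a term. -/
def funcs : Term F → List (F × ℕ)
  | var _ => []
  | app f ts => (f, ts.length) :: ts.attach.flatMap (fun t => funcs t.1)
decreasing_by simp_wf; have := List.sizeOf_lt_of_mem t.2; omega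

/-- Applying a substitution to a term. -/
def subst (g : ℕ → Term F) : Term F → Term F
  | var n => g n
  | app f ts => app f (ts.attach.map (fun t => subst g t.1))
decreasing_by simp_wf; have := List.sizeOf_lt_of_mem t.2; omega

/-- The number of occurrences of symbols (variables and function symbols) in a term. -/
def size : Term F → ℕ
  | var _ => 1
  | app _ ts => 1 + (ts.attach.map (fun t => size t.1)).sum
decreasing_by simp_wf; have := List.sizeOf_lt_of_mem t.2; omega

/-- A term is ground iff it contains no variables. -/
def IsGround (t : Term F) : Prop := t.vars = []

def isVar : Term F → Bool
  | var _ => true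
  | app _ _ => false

/-- A proper functional term is a term that is neither a variable nor a constant. -/
def isPF : Term F → Bool
  | app _ (_ :: _) => true
  | _ => false

/-- The subterm relation. -/
inductive Subterm : Term F → Term F → Prop
  | refl (t : Term F) : Subterm t t
  | app {s t : Term F} {f : F} {ts : List (Term F)} :
      t ∈ ts → Subterm s t → Subterm s (app f ts)

end Term

/-- Atoms over predicate symbols `P` and function symbols `F`. -/
structure Atom (P F : Type) where
  pred : P
  args : List (Term F)

namespace Atom
variable {P F : Type}

def subst (g : ℕ → Term F) (a : Atom P F) : Atom P F := ⟨a.pred, a.args.map (Term.subst g)⟩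
def vars (a : Atom P F) : List ℕ := a.args.flatMap Term.vars
def IsGround (a : Atom P F) : Prop := a.vars = []
def funcs (a : Atom P F) : List (F × ℕ) := a.args.flatMap Term.funcs
/-- Whether the atom contains a proper functional term. -/
def hasPF (a : Atom P F) : Bool := a.args.any Term.isPF
def size (a : Atom P F) : ℕ := 1 + (a.args.map Term.size).sum

end Atom

/-- A clause `H₁ ∨ ... ∨ Hₘ ← B₁ ∧ ... ∧ Bₖ` with head atoms `heads`
and body atoms `body`. -/
structure Clause (P F : Type) where
  heads : List (Atom P F)
  body : List (Atom P F)

namespace Clause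
variable {P F : Type}

def atoms (C : Clause P F) : List (Atom P F) := C.heads ++ C.body
def vars (C : Clause P F) : List ℕ := C.atoms.flatMap Atom.vars
def bodyVars (C : Clause P F) : List ℕ := C.body.flatMap Atom.vars
def headVars (C : Clause P F) : List ℕ := C.heads.flatMap Atom.vars
def maxVar (C : Clause P F) : ℕ := C.vars.foldr max 0
def subst (g : ℕ → Term F) (C : Clause P F) : Clause P F :=
  ⟨C.heads.map (Atom.subst g), C.body.map (Atom.subst g)⟩
/-- The predicate symbols (with the arity of the occurrence) occurring in a clause. -/
def preds (C : Clause P F) : List (P × ℕ) := C.atoms.map (fun a => (a.pred, a.args.length))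
/-- The function symbols (with the arity of the occurrence) occurring in a clause. -/
def funcs (C : Clause P F) : List (F × ℕ) := C.atoms.flatMap Atom.funcs
/-- The number of occurrences of symbols in a clause. -/
def size (C : Clause P F) : ℕ := (C.atoms.map Atom.size).sum

/-- A clause is range-restricted iff every variable occurring in it occurs in its body. -/
def RangeRestricted (C : Clause P F) : Prop := ∀ v ∈ C.vars, v ∈ C.bodyVars

/-- A Bernays–Schönfinkel clause: every functional term occurring in it is a constant. -/
def BS (C : Clause P F) : Prop := ∀ fn ∈ C.funcs, fn.2 = 0

end Clause

/-- A clause set is range-restricted iff all its clauses are. -/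
def RangeRestrictedSet {P F : Type} (M : Set (Clause P F)) : Prop :=
  ∀ C ∈ M, C.RangeRestricted

/-- The predicate symbols (with arities) occurring in a clause set. -/
def predsOf {P F : Type} (M : Set (Clause P F)) : Set (P × ℕ) :=
  { pn | ∃ C ∈ M, pn ∈ C.preds }

/-- The function symbols (with arities) occurring in a clause set. -/
def funcsOf {P F : Type} (M : Set (Clause P F)) : Set (F × ℕ) :=
  { fn | ∃ C ∈ M, fn ∈ C.funcs }

/-- A signature: a set of predicate symbols with arities and
a set of function symbols with arities. -/
structure Sig (P F : Type) where
  preds : Set (P × ℕ)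
  funcs : Set (F × ℕ)

/-- The clause set `M` is well-formed over the signature `σ`: all symbols occurring in `M`
belong to `σ` (with matching arities). -/
def WFSet {P F : Type} (σ : Sig P F) (M : Set (Clause P F)) : Prop :=
  ∀ C ∈ M, (∀ pn ∈ C.preds, pn ∈ σ.preds) ∧ (∀ fn ∈ C.funcs, fn ∈ σ.funcs)

/-- The total number of occurrences of symbols in a clause set. -/
noncomputable def setSize {P F : Type} (M : Set (Clause P F)) : ℕ :=
  ∑ᶠ C ∈ M, C.size

/-! ### Herbrand semantics -/

/-- A substitution is ground iff it maps every variable to a ground term. -/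
def GroundSubst {F : Type} (g : ℕ → Term F) : Prop := ∀ n, (g n).IsGround

/-- A (Herbrand) interpretation `I` (a set of ground atoms) satisfies a clause iff
it satisfies every ground instance of it. -/
def satClause {P F : Type} (I : Set (Atom P F)) (C : Clause P F) : Prop :=
  ∀ g : ℕ → Term F, GroundSubst g →
    (∀ a ∈ C.body, a.subst g ∈ I) → ∃ a ∈ C.heads, a.subst g ∈ I

/-- A clause set is satisfiable iff some Herbrand interpretation (a set of ground atoms)
satisfies every ground instance of every clause of it. -/
def Satisfiable {P F : Type} (M : Set (Clause P F)) : Prop :=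
  ∃ I : Set (Atom P F), (∀ a ∈ I, a.IsGround) ∧ ∀ C ∈ M, satClause I C

/-! ### Equality axioms and E-satisfiability -/

/-- The equality atom `s ≈ t` (`eqP` being the distinguished equality predicate `≈`). -/
def eqAtom {P F : Type} (eqP : P) (s t : Term F) : Atom P F := ⟨eqP, [s, t]⟩

def rangeVars {F : Type} (n : ℕ) : List (Term F) := (List.range n).map Term.var

def xsList {F : Type} (n : ℕ) : List (Term F) := (List.range n).map (fun i => Term.var (2*i))
def ysList {F : Type} (n : ℕ) : List (Term F) := (List.range n).map (fun i => Term.var (2*i+1))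
def eqConjList {P F : Type} (eqP : P) (n : ℕ) : List (Atom P F) :=
  (List.range n).map (fun i => eqAtom eqP (Term.var (2*i)) (Term.var (2*i+1)))

/-- The equality axioms `EAX`: `≈` is reflexive, symmetric, transitive and compatible with
the given function and predicate symbols. -/
def EAX {P F : Type} (eqP : P) (Ps : Set (P × ℕ)) (Fs : Set (F × ℕ)) : Set (Clause P F) :=
  { ⟨[eqAtom eqP (Term.var 0) (Term.var 0)], []⟩,
    ⟨[eqAtom eqP (Term.var 1) (Term.var 0)], [eqAtom eqP (Term.var 0) (Term.var 1)]⟩,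
    ⟨[eqAtom eqP (Term.var 0) (Term.var 2)],
      [eqAtom eqP (Term.var 0) (Term.var 1), eqAtom eqP (Term.var 1) (Term.var 2)]⟩ } ∪
  { D | ∃ fn ∈ Fs,
      D = ⟨[eqAtom eqP (Term.app fn.1 (xsList fn.2)) (Term.app fn.1 (ysList fn.2))],
           eqConjList eqP fn.2⟩ } ∪
  { D | ∃ pn ∈ Ps,
      D = ⟨[⟨pn.1, ysList pn.2⟩], ⟨pn.1, xsList pn.2⟩ :: eqConjList eqP pn.2⟩ }

/-- A clause set `M` is E-satisfiable iff `M` together with the equality axioms for the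
symbols occurring in `M` is satisfiable. -/
def ESatisfiable {P F : Type} (eqP : P) (M : Set (Clause P F)) : Prop :=
  Satisfiable (M ∪ EAX eqP (predsOf M) (funcsOf M))

/-! ### Range-restricting transformations -/

/-- The atom `dom(t)`. -/
def domAtom {P F : Type} (domP : P) (t : Term F) : Atom P F := ⟨domP, [t]⟩

/-- The term `c` for a constant `c`. -/
def cTerm {F : Type} (c : F) : Term F := Term.app c []

/-- The clause `dom(c) ← ⊤`. -/
def domcClause {P F : Type} (domP : P) (c : F) : Clause P F :=
  ⟨[domAtom domP (cTerm c)], []⟩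

/-- Range-restricting a clause (Step (2) of `crr`, Step (3) of `rr`):
`H ← B` becomes `H ← B ∧ dom(x₁) ∧ ... ∧ dom(xₖ)` where `x₁,...,xₖ` are the variables
occurring in the head but not in the body. -/
def rangeRestrictClause {P F : Type} (domP : P) (C : Clause P F) : Clause P F :=
  ⟨C.heads, C.body ++
    ((C.headVars.filter (fun v => v ∉ C.bodyVars)).dedup).map
      (fun v => domAtom domP (Term.var v))⟩

/-- The argument list of the term abstraction of an atom: argument positions holding
non-variable terms are replaced by fresh variables. -/
def abstrArgs {F : Type} (base : ℕ) (ts : List (Term F)) : List (Term F) :=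
  ts.mapIdx (fun i t => if t.isVar then t else Term.var (base + i))

/-- Step (2) of the `rr` transformation: for each clause `H ← B` of `M`, each body atom
`P(t₁,...,tₙ)` of `B` with term abstraction `P(s₁,...,sₙ)` and abstraction substitution `α`,
the clauses `dom(xᵢ)α ← P(s₁,...,sₙ)` for every `xᵢ` in the domain of `α`. -/
def step2Set {P F : Type} (domP : P) (M : Set (Clause P F)) : Set (Clause P F) :=
  { D | ∃ C ∈ M, ∃ a ∈ C.body, ∃ i : Fin a.args.length,
        (a.args.get i).isVar = false ∧
        D = ⟨[domAtom domP (a.args.get i)],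
             [⟨a.pred, abstrArgs (C.maxVar + 1) a.args⟩]⟩ }

/-- Step (4) of the `rr` transformation: the clauses `dom(xᵢ) ← P(x₁,...,xₙ)` for every
`n`-ary predicate symbol `P` of the signature and every `1 ≤ i ≤ n`. -/
def step4Set {P F : Type} (domP : P) (Ps : Set (P × ℕ)) : Set (Clause P F) :=
  { D | ∃ pn ∈ Ps, ∃ i, i < pn.2 ∧
        D = ⟨[domAtom domP (Term.var i)], [⟨pn.1, rangeVars pn.2⟩]⟩ }

/-- Step (5) of the `rr` transformation: the clauses `dom(xᵢ) ← dom(f(x₁,...,xₙ))` for every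
`n`-ary function symbol `f` of the signature and every `1 ≤ i ≤ n`. -/
def step5Set {P F : Type} (domP : P) (Fs : Set (F × ℕ)) : Set (Clause P F) :=
  { D | ∃ fn ∈ Fs, ∃ i, i < fn.2 ∧
        D = ⟨[domAtom domP (Term.var i)],
             [domAtom domP (Term.app fn.1 (rangeVars fn.2))]⟩ }

/-- The new range-restricting transformation `rr` (over the signature `σ`, with fresh unary
predicate symbol `dom` and constant `c`): the clauses of `M`, the clause `dom(c) ← ⊤` and
the Step-(2) clauses, all range-restricted by Step (3), together with the Step-(4) and
Step-(5) clauses. -/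
def rr {P F : Type} [DecidableEq P] [DecidableEq F] (σ : Sig P F) (domP : P) (c : F)
    (M : Set (Clause P F)) : Set (Clause P F) :=
  (rangeRestrictClause domP '' (M ∪ {domcClause domP c} ∪ step2Set domP M))
  ∪ step4Set domP σ.preds ∪ step5Set domP σ.funcs

/-- Step (3) of the classical transformation `crr`: the clauses
`dom(f(x₁,...,xₙ)) ← dom(x₁) ∧ ... ∧ dom(xₙ)` enumerating the Herbrand universe. -/
def crrStep3 {P F : Type} (domP : P) (Fs : Set (F × ℕ)) : Set (Clause P F) :=
  { D | ∃ fn ∈ Fs,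
        D = ⟨[domAtom domP (Term.app fn.1 (rangeVars fn.2))],
             (List.range fn.2).map (fun i => domAtom domP (Term.var i))⟩ }

/-- The classical range-restricting transformation `crr`. -/
def crr {P F : Type} [DecidableEq P] [DecidableEq F] (σ : Sig P F) (domP : P) (c : F)
    (M : Set (Clause P F)) : Set (Clause P F) :=
  (rangeRestrictClause domP '' (M ∪ {domcClause domP c})) ∪ crrStep3 domP σ.funcs

/-! ### Shifting -/

/-- Partial flattening of the arguments of a non-equational body atom: top-level proper
functional terms are replaced by fresh variables. The `j`-th body atom uses the fresh
variables `base + Nat.pair j i`. -/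
def pfArgs {P F : Type} [DecidableEq P] (eqP : P) (base j : ℕ) (a : Atom P F) : Atom P F :=
  if a.pred = eqP then a
  else ⟨a.pred, a.args.mapIdx (fun i t => if t.isPF then Term.var (base + Nat.pair j i) else t)⟩

/-- The equations `tᵢ ≈ xᵢ` introduced by partially flattening a body atom. -/
def pfEqs {P F : Type} [DecidableEq P] (eqP : P) (base j : ℕ) (a : Atom P F) :
    List (Atom P F) :=
  if a.pred = eqP then []
  else (a.args.mapIdx (fun i t => (i, t))).filterMap
        (fun p => if p.2.isPF then
            some (eqAtom eqP p.2 (Term.var (base + Nat.pair j p.1))) else none)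

/-- Partial flattening of a clause. -/
def pfClause {P F : Type} [DecidableEq P] (eqP : P) (C : Clause P F) : Clause P F :=
  ⟨C.heads,
   C.body.mapIdx (fun j a => pfArgs eqP (C.maxVar + 1) j a) ++
   (C.body.mapIdx (fun j a => pfEqs eqP (C.maxVar + 1) j a)).flatten⟩

/-- The reflexivity unit clause `x ≈ x ← ⊤`. -/
def reflClause {P F : Type} (eqP : P) : Clause P F :=
  ⟨[eqAtom eqP (Term.var 0) (Term.var 0)], []⟩

/-- The partial flattening transformation `pf`. -/
def pf {P F : Type} [DecidableEq P] (eqP : P) (M : Set (Clause P F)) : Set (Clause P F) :=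
  pfClause eqP '' M ∪ {reflClause eqP}

/-- The atom `P̄(t₁,...,tₙ)` for the atom `P(t₁,...,tₙ)`, where `bar` maps each predicate
symbol `P` to the fresh predicate symbol `P̄` uniquely associated with it. -/
def barAtom {P F : Type} (bar : P → P) (a : Atom P F) : Atom P F := ⟨bar a.pred, a.args⟩

/-- Basic shifting of a clause: the body atoms containing a proper functional term are
moved, negated (via `bar`), into the head. -/
def bsClause {P F : Type} (bar : P → P) (C : Clause P F) : Clause P F :=
  ⟨C.heads ++ (C.body.filter (fun a => a.hasPF)).map (barAtom bar),
   C.body.filter (fun a => !a.hasPF)⟩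

/-- The predicate symbols (with arities) of shifted atoms of `M`. -/
def shiftedPreds {P F : Type} (M : Set (Clause P F)) : Set (P × ℕ) :=
  { pn | ∃ C ∈ M, ∃ a ∈ C.body, a.hasPF = true ∧ pn = (a.pred, a.args.length) }

/-- The basic shifting transformation `bs`: shift deep body atoms and add the shifted atom
consistency clauses `⊥ ← P(x₁,...,xₙ) ∧ P̄(x₁,...,xₙ)`. -/
def bs {P F : Type} (bar : P → P) (M : Set (Clause P F)) : Set (Clause P F) :=
  bsClause bar '' M ∪
  { D | ∃ pn ∈ shiftedPreds M,
        D = ⟨[], [⟨pn.1, rangeVars pn.2⟩, ⟨bar pn.1, rangeVars pn.2⟩]⟩ }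

/-- The shifting transformation: `sh(M) = bs(pf(M))`. -/
def sh {P F : Type} [DecidableEq P] (eqP : P) (bar : P → P) (M : Set (Clause P F)) :
    Set (Clause P F) :=
  bs bar (pf eqP M)

/-! ### Blocking -/

/-- The head `x ≈ y ∨ x ≉ y` of the blocking clauses. -/
def blockSplitHead {P F : Type} (eqP neqP : P) : List (Atom P F) :=
  [eqAtom eqP (Term.var 0) (Term.var 1), eqAtom neqP (Term.var 0) (Term.var 1)]

/-- The clause `⊥ ← x ≈ y ∧ x ≉ y`. -/
def eqNeqBot {P F : Type} (eqP neqP : P) : Clause P F :=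
  ⟨[], [eqAtom eqP (Term.var 0) (Term.var 1), eqAtom neqP (Term.var 0) (Term.var 1)]⟩

/-- The unrestricted domain blocking transformation `blud`. -/
def blud {P F : Type} (domP eqP neqP : P) (M : Set (Clause P F)) : Set (Clause P F) :=
  M ∪ { ⟨blockSplitHead eqP neqP, [domAtom domP (Term.var 0), domAtom domP (Term.var 1)]⟩,
        eqNeqBot eqP neqP }

/-- The atom `sub(s,t)`. -/
def subAtom {P F : Type} (subP : P) (s t : Term F) : Atom P F := ⟨subP, [s, t]⟩

/-- The axioms describing the subterm relationship: `sub(x,x) ← dom(x)` and, for every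
`n`-ary function symbol `f` of the signature and `1 ≤ i ≤ n`,
`sub(x, f(x₁,...,xₙ)) ← sub(x,xᵢ) ∧ dom(x) ∧ dom(f(x₁,...,xₙ))`. -/
def subClauses {P F : Type} (domP subP : P) (Fs : Set (F × ℕ)) : Set (Clause P F) :=
  { ⟨[subAtom subP (Term.var 0) (Term.var 0)], [domAtom domP (Term.var 0)]⟩ } ∪
  { D | ∃ fn ∈ Fs, ∃ i, i < fn.2 ∧
        D = ⟨[subAtom subP (Term.var fn.2) (Term.app fn.1 (rangeVars fn.2))],
             [subAtom subP (Term.var fn.2) (Term.var i),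
              domAtom domP (Term.var fn.2),
              domAtom domP (Term.app fn.1 (rangeVars fn.2))]⟩ }

/-- The subterm domain blocking transformation `blsd`. -/
def blsd {P F : Type} (σ : Sig P F) (domP eqP neqP subP : P) (M : Set (Clause P F)) :
    Set (Clause P F) :=
  M ∪ subClauses domP subP σ.funcs ∪
  { ⟨blockSplitHead eqP neqP, [subAtom subP (Term.var 0) (Term.var 1)]⟩,
    eqNeqBot eqP neqP }

/-- The subterm predicate blocking transformation `blsp`. -/
def blsp {P F : Type} (σ : Sig P F) (domP eqP neqP subP : P) (M : Set (Clause P F)) :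
    Set (Clause P F) :=
  M ∪ subClauses domP subP σ.funcs ∪
  { D | ∃ p : P, (p, 1) ∈ σ.preds ∧
        D = ⟨blockSplitHead eqP neqP,
             [subAtom subP (Term.var 0) (Term.var 1),
              ⟨p, [Term.var 0]⟩, ⟨p, [Term.var 1]⟩]⟩ } ∪
  { eqNeqBot eqP neqP }

/-- The unrestricted predicate blocking transformation `blup`. -/
def blup {P F : Type} (σ : Sig P F) (domP eqP neqP : P) (M : Set (Clause P F)) :
    Set (Clause P F) :=
  M ∪ { D | ∃ p : P, (p, 1) ∈ σ.preds ∧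
        D = ⟨blockSplitHead eqP neqP, [⟨p, [Term.var 0]⟩, ⟨p, [Term.var 1]⟩]⟩ } ∪
  { eqNeqBot eqP neqP }

/-! ### Combined transformations -/

/-- The base transformations `rr`, `sh∘rr`, `crr`, `sh∘crr`
(composition read left-to-right, so `(sh∘rr)(M) = rr(sh(M))`). -/
inductive BaseTr | rr | shrr | crr | shcrr

/-- The optional blocking transformations. -/
inductive BlockTr | id | blsd | blsp | blud | blup

def applyBase {P F : Type} [DecidableEq P] [DecidableEq F] (σ : Sig P F) (domP : P) (c : F)
    (eqP : P) (bar : P → P) : BaseTr → Set (Clause P F) → Set (Clause P F)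
  | .rr, M => rr σ domP c M
  | .shrr, M => rr σ domP c (sh eqP bar M)
  | .crr, M => crr σ domP c M
  | .shcrr, M => crr σ domP c (sh eqP bar M)

def applyBlock {P F : Type} (σ : Sig P F) (domP eqP neqP subP : P) :
    BlockTr → Set (Clause P F) → Set (Clause P F)
  | .id, M => M
  | .blsd, M => blsd σ domP eqP neqP subP M
  | .blsp, M => blsp σ domP eqP neqP subP M
  | .blud, M => blud domP eqP neqP M
  | .blup, M => blup σ domP eqP neqP M

/-- A combined transformation: a base transformation optionally followed by a blocking
transformation (composition read left-to-right). -/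
def applyTr {P F : Type} [DecidableEq P] [DecidableEq F] (σ : Sig P F) (domP : P) (c : F)
    (eqP neqP subP : P) (bar : P → P) (b : BaseTr) (τ : BlockTr) (M : Set (Clause P F)) :
    Set (Clause P F) :=
  applyBlock σ domP eqP neqP subP τ (applyBase σ domP c eqP bar b M)

/-- The clause `x ≈ x ← dom(x)`. -/
def reflDomClause {P F : Type} (domP eqP : P) : Clause P F :=
  ⟨[eqAtom eqP (Term.var 0) (Term.var 0)], [domAtom domP (Term.var 0)]⟩

end BUMG

namespace BUMG

/-! ### Auxiliary lemmas -/

section Aux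

set_option linter.unusedSectionVars false

variable {P F : Type}

theorem Term.my_ind {F : Type} {motive : Term F → Prop} (hv : ∀ v, motive (.var v))
    (ha : ∀ f ts, (∀ t ∈ ts, motive t) → motive (.app f ts)) : ∀ t, motive t
  | .var v => hv v
  | .app f ts => ha f ts (fun t ht => Term.my_ind hv ha t)
decreasing_by have := List.sizeOf_lt_of_mem ht; simp_wf; omega

@[simp] theorem Term.subst_var (g : ℕ → Term F) (v : ℕ) : (Term.var v).subst g = g v := by
  simp [Term.subst]

@[simp] theorem Term.subst_app (g : ℕ → Term F) (f : F) (ts : List (Term F)) :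
    (Term.app f ts).subst g = Term.app f (ts.map (Term.subst g)) := by
  rw [Term.subst, List.attach_map_val]

@[simp] theorem Term.vars_var (v : ℕ) : (Term.var v : Term F).vars = [v] := by
  simp [Term.vars]

@[simp] theorem Term.vars_app (f : F) (ts : List (Term F)) :
    (Term.app f ts).vars = ts.flatMap Term.vars := by
  rw [Term.vars, List.flatMap, List.flatMap, List.attach_map_val]

@[simp] theorem Term.funcs_var (v : ℕ) : (Term.var v : Term F).funcs = [] := by
  simp [Term.funcs]

@[simp] theorem Term.funcs_app (f : F) (ts : List (Term F)) :
    (Term.app f ts).funcs = (f, ts.length) :: ts.flatMap Term.funcs := by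
  rw [Term.funcs, List.flatMap, List.flatMap, List.attach_map_val]

theorem Term.isGround_app {f : F} {ts : List (Term F)} :
    (Term.app f ts).IsGround ↔ ∀ t ∈ ts, t.IsGround := by
  simp [Term.IsGround, List.flatMap_eq_nil_iff]

theorem Term.subst_isGround {g : ℕ → Term F} (hg : GroundSubst g) :
    ∀ t : Term F, (t.subst g).IsGround := by
  intro t
  induction t using Term.my_ind with
  | hv v => simpa using hg v
  | ha f ts ih =>
    rw [Term.subst_app, Term.isGround_app]
    intro u hu
    rcases List.mem_map.1 hu with ⟨w, hw, rfl⟩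
    exact ih w hw

theorem Term.subst_congr {g g' : ℕ → Term F} :
    ∀ t : Term F, (∀ v ∈ t.vars, g v = g' v) → t.subst g = t.subst g' := by
  intro t
  induction t using Term.my_ind with
  | hv v => intro h; simpa using h v (by simp)
  | ha f ts ih =>
    intro h
    rw [Term.subst_app, Term.subst_app]
    congr 1
    apply List.map_congr_left
    intro u hu
    exact ih u hu (fun v hv => h v (by simp [List.mem_flatMap]; exact ⟨u, hu, hv⟩))

open Classical in
/-- Collapse of terms: function applications outside `Fs` are replaced by the constant
`c`. -/
noncomputable def kol (Fs : Set (F × ℕ)) (c : F) : Term F → Term F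
  | .var v => .var v
  | .app f ts =>
      if (f, ts.length) ∈ Fs then .app f (ts.attach.map (fun t => kol Fs c t.1))
      else .app c []
decreasing_by have := List.sizeOf_lt_of_mem t.2; simp_wf; omega

theorem kol_app_pos {Fs : Set (F × ℕ)} {c : F} {f : F} {ts : List (Term F)}
    (h : (f, ts.length) ∈ Fs) :
    kol Fs c (Term.app f ts) = Term.app f (ts.map (kol Fs c)) := by
  rw [kol, if_pos h, List.attach_map_val]

theorem kol_app_neg {Fs : Set (F × ℕ)} {c : F} {f : F} {ts : List (Term F)}
    (h : (f, ts.length) ∉ Fs) :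
    kol Fs c (Term.app f ts) = Term.app c [] := by
  rw [kol, if_neg h]

@[simp] theorem kol_var (Fs : Set (F × ℕ)) (c : F) (v : ℕ) :
    kol Fs c (Term.var v) = Term.var v := by rw [kol]

theorem kol_isGround {Fs : Set (F × ℕ)} {c : F} :
    ∀ {t : Term F}, t.IsGround → (kol Fs c t).IsGround := by
  intro t
  induction t using Term.my_ind with
  | hv v => intro h; simp [Term.IsGround] at h
  | ha f ts ih =>
    intro h
    rw [Term.isGround_app] at h
    by_cases hf : (f, ts.length) ∈ Fs
    · rw [kol_app_pos hf, Term.isGround_app]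
      intro u hu
      rcases List.mem_map.1 hu with ⟨w, hw, rfl⟩
      exact ih w hw (h w hw)
    · rw [kol_app_neg hf]; simp [Term.IsGround]

theorem kol_subst {Fs : Set (F × ℕ)} {c : F} {g : ℕ → Term F} :
    ∀ {t : Term F}, (∀ fn ∈ t.funcs, fn ∈ Fs) →
      kol Fs c (t.subst g) = t.subst (fun v => kol Fs c (g v)) := by
  intro t
  induction t using Term.my_ind with
  | hv v => intro _; simp
  | ha f ts ih =>
    intro h
    have hf : (f, (ts.map (Term.subst g)).length) ∈ Fs := by
      simpa using h (f, ts.length) (by simp)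
    rw [Term.subst_app, Term.subst_app, kol_app_pos hf, List.map_map]
    congr 1
    apply List.map_congr_left
    intro u hu
    exact ih u hu (fun fn hfn => h fn (by simp [List.mem_flatMap]; right; exact ⟨u, hu, hfn⟩))

theorem groundSubst_kol {Fs : Set (F × ℕ)} {c : F} {g : ℕ → Term F} (hg : GroundSubst g) :
    GroundSubst (fun v => kol Fs c (g v)) := fun v => kol_isGround (hg v)

theorem Atom.subst_isGround {g : ℕ → Term F} (hg : GroundSubst g) (a : Atom P F) :
    (a.subst g).IsGround := by
  simp only [Atom.IsGround, Atom.subst, Atom.vars, List.flatMap_eq_nil_iff]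
  intro t ht
  rcases List.mem_map.1 ht with ⟨u, _, rfl⟩
  exact Term.subst_isGround hg u

theorem Atom.subst_congr {g g' : ℕ → Term F} (a : Atom P F)
    (h : ∀ v ∈ a.vars, g v = g' v) : a.subst g = a.subst g' := by
  simp only [Atom.subst, Atom.mk.injEq, true_and]
  apply List.map_congr_left
  intro t ht
  exact Term.subst_congr t (fun v hv => h v (by simp [Atom.vars, List.mem_flatMap]; exact ⟨t, ht, hv⟩))

/-- Collapse of an atom. -/
noncomputable def kAtom (Fs : Set (F × ℕ)) (c : F) (a : Atom P F) : Atom P F :=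
  ⟨a.pred, a.args.map (kol Fs c)⟩

theorem kAtom_subst {Fs : Set (F × ℕ)} {c : F} {g : ℕ → Term F} {a : Atom P F}
    (ha : ∀ fn ∈ a.funcs, fn ∈ Fs) :
    kAtom Fs c (a.subst g) = a.subst (fun v => kol Fs c (g v)) := by
  simp only [kAtom, Atom.subst, List.map_map, Atom.mk.injEq, true_and]
  apply List.map_congr_left
  intro t ht
  exact kol_subst (fun fn hfn => ha fn (by simp [Atom.funcs, List.mem_flatMap]; exact ⟨t, ht, hfn⟩))

@[simp] theorem eqAtom_subst (eqP : P) (s t : Term F) (g : ℕ → Term F) :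
    (eqAtom eqP s t).subst g = eqAtom eqP (s.subst g) (t.subst g) := rfl

@[simp] theorem domAtom_subst (domP : P) (t : Term F) (g : ℕ → Term F) :
    (domAtom domP t).subst g = domAtom domP (t.subst g) := rfl

@[simp] theorem subAtom_subst (subP : P) (s t : Term F) (g : ℕ → Term F) :
    (subAtom subP s t).subst g = subAtom subP (s.subst g) (t.subst g) := rfl

theorem mem_vars_of_atom {C : Clause P F} {a : Atom P F} (ha : a ∈ C.atoms) {v : ℕ}
    (hv : v ∈ a.vars) : v ∈ C.vars := by
  simp only [Clause.vars, List.mem_flatMap]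
  exact ⟨a, ha, hv⟩

theorem le_foldr_max {l : List ℕ} {v : ℕ} (h : v ∈ l) : v ≤ l.foldr max 0 := by
  induction l with
  | nil => cases h
  | cons x xs ih =>
    rcases List.mem_cons.1 h with rfl | h'
    · exact le_max_left _ _
    · exact le_trans (ih h') (le_max_right _ _)

theorem le_maxVar_of_mem {C : Clause P F} {v : ℕ} (h : v ∈ C.vars) : v ≤ C.maxVar :=
  le_foldr_max h

theorem mem_preds_of_atom {C : Clause P F} {a : Atom P F} (ha : a ∈ C.atoms) :
    (a.pred, a.args.length) ∈ C.preds := by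
  simp only [Clause.preds, List.mem_map]
  exact ⟨a, ha, rfl⟩

theorem mem_funcs_of_atom {C : Clause P F} {a : Atom P F} (ha : a ∈ C.atoms) {fn : F × ℕ}
    (h : fn ∈ a.funcs) : fn ∈ C.funcs := by
  simp only [Clause.funcs, List.mem_flatMap]
  exact ⟨a, ha, h⟩

theorem mem_atom_funcs {a : Atom P F} {t : Term F} (ht : t ∈ a.args) {fn : F × ℕ}
    (h : fn ∈ t.funcs) : fn ∈ a.funcs := by
  simp only [Atom.funcs, List.mem_flatMap]
  exact ⟨t, ht, h⟩

theorem getD_range_map {α : Type _} (l : List α) (d : α) :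
    (List.range l.length).map (fun i => l.getD i d) = l := by
  apply List.ext_getElem
  · simp
  · intro n h1 h2
    rw [List.getElem_map, List.getElem_range, List.getD_eq_getElem l d (by simpa using h2)]

theorem rangeVars_subst (n : ℕ) (g : ℕ → Term F) :
    (rangeVars n : List (Term F)).map (Term.subst g) = (List.range n).map g := by
  simp [rangeVars, List.map_map, Function.comp]

/-! ### Equality properties of an interpretation -/

section Model

variable (I : Set (Atom P F)) (eqP : P)

def EqRefl : Prop := ∀ s : Term F, s.IsGround → eqAtom eqP s s ∈ I

def EqSym : Prop := ∀ s t : Term F, s.IsGround → t.IsGround →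
  eqAtom eqP s t ∈ I → eqAtom eqP t s ∈ I

def EqTrans : Prop := ∀ s t u : Term F, s.IsGround → t.IsGround → u.IsGround →
  eqAtom eqP s t ∈ I → eqAtom eqP t u ∈ I → eqAtom eqP s u ∈ I

def FCong (fn : F × ℕ) : Prop := ∀ s t : ℕ → Term F,
  (∀ i, (s i).IsGround) → (∀ i, (t i).IsGround) →
  (∀ i, i < fn.2 → eqAtom eqP (s i) (t i) ∈ I) →
  eqAtom eqP (Term.app fn.1 ((List.range fn.2).map s))
    (Term.app fn.1 ((List.range fn.2).map t)) ∈ I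

def PCong (pn : P × ℕ) : Prop := ∀ s t : ℕ → Term F,
  (∀ i, (s i).IsGround) → (∀ i, (t i).IsGround) →
  (∀ i, i < pn.2 → eqAtom eqP (s i) (t i) ∈ I) →
  ⟨pn.1, (List.range pn.2).map s⟩ ∈ I → ⟨pn.1, (List.range pn.2).map t⟩ ∈ I

end Model

/-- The substitution sending `2*i` to `s i` and `2*i+1` to `t i`. -/
def pairSubst (s t : ℕ → Term F) : ℕ → Term F :=
  fun v => if v % 2 = 0 then s (v / 2) else t (v / 2)

@[simp] theorem pairSubst_even (s t : ℕ → Term F) (i : ℕ) : pairSubst s t (2 * i) = s i := by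
  simp [pairSubst, Nat.mul_div_cancel_left _ (by norm_num : (0:ℕ) < 2), Nat.mul_mod_right]

@[simp] theorem pairSubst_odd (s t : ℕ → Term F) (i : ℕ) : pairSubst s t (2 * i + 1) = t i := by
  have h1 : (2 * i + 1) % 2 = 1 := by omega
  have h2 : (2 * i + 1) / 2 = i := by omega
  simp [pairSubst, h1, h2]

theorem groundSubst_pairSubst {s t : ℕ → Term F} (hs : ∀ i, (s i).IsGround)
    (ht : ∀ i, (t i).IsGround) : GroundSubst (pairSubst s t) := by
  intro v
  unfold pairSubst
  split
  · exact hs _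
  · exact ht _

theorem xsList_subst (n : ℕ) (g : ℕ → Term F) :
    (xsList n : List (Term F)).map (Term.subst g) = (List.range n).map (fun i => g (2 * i)) := by
  simp [xsList, List.map_map, Function.comp]

theorem ysList_subst (n : ℕ) (g : ℕ → Term F) :
    (ysList n : List (Term F)).map (Term.subst g) =
      (List.range n).map (fun i => g (2 * i + 1)) := by
  simp [ysList, List.map_map, Function.comp]

theorem mem_eqConjList {eqP : P} {n : ℕ} {a : Atom P F} (h : a ∈ (eqConjList eqP n : List (Atom P F))) :
    ∃ i, i < n ∧ a = eqAtom eqP (Term.var (2 * i)) (Term.var (2 * i + 1)) := by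
  simp only [eqConjList, List.mem_map, List.mem_range] at h
  rcases h with ⟨i, hi, rfl⟩
  exact ⟨i, hi, rfl⟩

theorem eqConjList_mem_self {eqP : P} {n i : ℕ} (h : i < n) :
    (eqAtom eqP (Term.var (2 * i)) (Term.var (2 * i + 1)) : Atom P F) ∈ (eqConjList eqP n : List (Atom P F)) := by
  simp only [eqConjList, List.mem_map, List.mem_range]
  exact ⟨i, h, rfl⟩

/-! ### EAX extraction and satisfaction -/

theorem eax_refl_mem (eqP : P) (Ps : Set (P × ℕ)) (Fs : Set (F × ℕ)) :
    (⟨[eqAtom eqP (Term.var 0) (Term.var 0)], []⟩ : Clause P F) ∈ EAX eqP Ps Fs :=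
  Or.inl (Or.inl (by left; rfl))

theorem eax_sym_mem (eqP : P) (Ps : Set (P × ℕ)) (Fs : Set (F × ℕ)) :
    (⟨[eqAtom eqP (Term.var 1) (Term.var 0)], [eqAtom eqP (Term.var 0) (Term.var 1)]⟩ :
      Clause P F) ∈ EAX eqP Ps Fs :=
  Or.inl (Or.inl (by right; left; rfl))

theorem eax_trans_mem (eqP : P) (Ps : Set (P × ℕ)) (Fs : Set (F × ℕ)) :
    (⟨[eqAtom eqP (Term.var 0) (Term.var 2)],
      [eqAtom eqP (Term.var 0) (Term.var 1), eqAtom eqP (Term.var 1) (Term.var 2)]⟩ :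
      Clause P F) ∈ EAX eqP Ps Fs :=
  Or.inl (Or.inl (by right; right; rfl))

theorem eax_fcong_mem (eqP : P) (Ps : Set (P × ℕ)) {Fs : Set (F × ℕ)} {fn : F × ℕ}
    (h : fn ∈ Fs) :
    (⟨[eqAtom eqP (Term.app fn.1 (xsList fn.2)) (Term.app fn.1 (ysList fn.2))],
      eqConjList eqP fn.2⟩ : Clause P F) ∈ EAX eqP Ps Fs :=
  Or.inl (Or.inr ⟨fn, h, rfl⟩)

theorem eax_pcong_mem (eqP : P) {Ps : Set (P × ℕ)} (Fs : Set (F × ℕ)) {pn : P × ℕ}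
    (h : pn ∈ Ps) :
    (⟨[⟨pn.1, ysList pn.2⟩], ⟨pn.1, xsList pn.2⟩ :: eqConjList eqP pn.2⟩ : Clause P F) ∈
      EAX eqP Ps Fs :=
  Or.inr ⟨pn, h, rfl⟩

theorem eax_extract {I : Set (Atom P F)} {eqP : P} {Ps : Set (P × ℕ)} {Fs : Set (F × ℕ)}
    (h : ∀ C ∈ EAX eqP Ps Fs, satClause I C) :
    EqRefl I eqP ∧ EqSym I eqP ∧ EqTrans I eqP ∧
      (∀ fn ∈ Fs, FCong I eqP fn) ∧ (∀ pn ∈ Ps, PCong I eqP pn) := by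
  refine ⟨?_, ?_, ?_, ?_, ?_⟩
  · intro s hs
    rcases h _ (eax_refl_mem eqP Ps Fs) (fun _ => s) (fun _ => hs) (by simp) with ⟨a, ha, hin⟩
    rcases List.mem_singleton.1 ha with rfl
    simpa using hin
  · intro s t hs ht hst
    have hg : GroundSubst (fun v => if v = 0 then s else t) := by
      intro v; dsimp only; split <;> assumption
    have hbody : ∀ a ∈ [eqAtom eqP (Term.var 0) (Term.var 1)],
        a.subst (fun v => if v = 0 then s else t) ∈ I := by
      intro a ha
      rcases List.mem_singleton.1 ha with rfl
      simpa using hst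
    rcases h _ (eax_sym_mem eqP Ps Fs) _ hg hbody with ⟨a, ha, hin⟩
    rcases List.mem_singleton.1 ha with rfl
    simpa using hin
  · intro s t u hs ht hu h1 h2
    have hg : GroundSubst (fun v => if v = 0 then s else if v = 1 then t else u) := by
      intro v; dsimp only; split
      · assumption
      · split <;> assumption
    have hbody : ∀ a ∈ [eqAtom eqP (Term.var 0) (Term.var 1), eqAtom eqP (Term.var 1) (Term.var 2)],
        a.subst (fun v => if v = 0 then s else if v = 1 then t else u) ∈ I := by
      intro a ha
      rcases List.mem_cons.1 ha with rfl | ha'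
      · simpa using h1
      · rcases List.mem_singleton.1 ha' with rfl
        simpa using h2
    rcases h _ (eax_trans_mem eqP Ps Fs) _ hg hbody with ⟨a, ha, hin⟩
    rcases List.mem_singleton.1 ha with rfl
    simpa using hin
  · intro fn hfn s t hs ht hst
    have hbody : ∀ a ∈ (eqConjList eqP fn.2 : List (Atom P F)),
        a.subst (pairSubst s t) ∈ I := by
      intro a ha
      rcases mem_eqConjList ha with ⟨i, hi, rfl⟩
      simpa using hst i hi
    rcases h _ (eax_fcong_mem eqP Ps hfn) (pairSubst s t) (groundSubst_pairSubst hs ht) hbody with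
      ⟨a, ha, hin⟩
    rcases List.mem_singleton.1 ha with rfl
    simp only [eqAtom_subst, Term.subst_app, xsList_subst, ysList_subst] at hin
    have e1 : (List.range fn.2).map (fun i => pairSubst s t (2 * i)) = (List.range fn.2).map s :=
      List.map_congr_left (fun i _ => pairSubst_even s t i)
    have e2 : (List.range fn.2).map (fun i => pairSubst s t (2 * i + 1)) =
        (List.range fn.2).map t :=
      List.map_congr_left (fun i _ => pairSubst_odd s t i)
    rwa [e1, e2] at hin
  · intro pn hpn s t hs ht hst hbase
    have hbody : ∀ a ∈ (⟨pn.1, xsList pn.2⟩ : Atom P F) :: eqConjList eqP pn.2,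
        a.subst (pairSubst s t) ∈ I := by
      intro a ha
      rcases List.mem_cons.1 ha with rfl | ha'
      · have e1 : (List.range pn.2).map (fun i => pairSubst s t (2 * i)) =
            (List.range pn.2).map s :=
          List.map_congr_left (fun i _ => pairSubst_even s t i)
        simp only [Atom.subst, xsList_subst]
        rwa [e1]
      · rcases mem_eqConjList ha' with ⟨i, hi, rfl⟩
        simpa using hst i hi
    rcases h _ (eax_pcong_mem eqP Fs hpn) (pairSubst s t) (groundSubst_pairSubst hs ht) hbody with
      ⟨a, ha, hin⟩
    rcases List.mem_singleton.1 ha with rfl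
    have e2 : (List.range pn.2).map (fun i => pairSubst s t (2 * i + 1)) =
        (List.range pn.2).map t :=
      List.map_congr_left (fun i _ => pairSubst_odd s t i)
    simp only [Atom.subst, ysList_subst] at hin
    rwa [e2] at hin

theorem eax_satisfy {I : Set (Atom P F)} {eqP : P} (Ps : Set (P × ℕ)) (Fs : Set (F × ℕ))
    (hr : EqRefl I eqP) (hs : EqSym I eqP) (ht : EqTrans I eqP)
    (hf : ∀ fn ∈ Fs, FCong I eqP fn) (hp : ∀ pn ∈ Ps, PCong I eqP pn) :
    ∀ C ∈ EAX eqP Ps Fs, satClause I C := by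
  intro C hC
  rcases hC with (h3 | ⟨fn, hfn, rfl⟩) | ⟨pn, hpn, rfl⟩
  · rcases h3 with rfl | rfl | rfl
    · intro g hg _
      exact ⟨_, List.mem_singleton_self _, by simpa using hr (g 0) (hg 0)⟩
    · intro g hg hb
      refine ⟨_, List.mem_singleton_self _, ?_⟩
      have := hb _ (List.mem_singleton_self _)
      simp only [eqAtom_subst, Term.subst_var] at this ⊢
      exact hs (g 0) (g 1) (hg 0) (hg 1) this
    · intro g hg hb
      refine ⟨_, List.mem_singleton_self _, ?_⟩
      have h1 := hb _ (List.mem_cons_self)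
      have h2 := hb _ (List.mem_cons.2 (Or.inr (List.mem_singleton_self _)))
      simp only [eqAtom_subst, Term.subst_var] at h1 h2 ⊢
      exact ht (g 0) (g 1) (g 2) (hg 0) (hg 1) (hg 2) h1 h2
  · intro g hg hb
    refine ⟨_, List.mem_singleton_self _, ?_⟩
    have := hf fn hfn (fun i => g (2 * i)) (fun i => g (2 * i + 1)) (fun i => hg _) (fun i => hg _)
      (fun i hi => by simpa using hb _ (List.mem_map_of_mem (List.mem_range.2 hi)))
    simpa [xsList_subst, ysList_subst] using this
  · intro g hg hb
    refine ⟨_, List.mem_singleton_self _, ?_⟩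
    have hbase := hb _ (List.mem_cons_self)
    have := hp pn hpn (fun i => g (2 * i)) (fun i => g (2 * i + 1)) (fun i => hg _) (fun i => hg _)
      (fun i hi => by
        simpa using hb _ (List.mem_cons.2 (Or.inr (List.mem_map_of_mem (List.mem_range.2 hi)))))
      (by simpa [Atom.subst, xsList_subst] using hbase)
    simpa [Atom.subst, ysList_subst] using this

/-! ### Structural lemmas about the transformations -/

@[simp] theorem rangeRestrictClause_heads (domP : P) (C : Clause P F) :
    (rangeRestrictClause domP C).heads = C.heads := rfl

theorem mem_rangeRestrictClause_body {domP : P} {C : Clause P F} {a : Atom P F}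
    (h : a ∈ C.body) : a ∈ (rangeRestrictClause domP C).body :=
  List.mem_append_left _ h

theorem rangeRestrictClause_body_cases {domP : P} {C : Clause P F} {a : Atom P F}
    (h : a ∈ (rangeRestrictClause domP C).body) :
    a ∈ C.body ∨ ∃ v, a = domAtom domP (Term.var v) := by
  rcases List.mem_append.1 h with h' | h'
  · exact Or.inl h'
  · rcases List.mem_map.1 h' with ⟨v, _, rfl⟩
    exact Or.inr ⟨v, rfl⟩

theorem mem_atoms_rangeRestrictClause {domP : P} {C : Clause P F} {a : Atom P F}
    (h : a ∈ C.atoms) : a ∈ (rangeRestrictClause domP C).atoms := by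
  rcases List.mem_append.1 h with h' | h'
  · exact List.mem_append_left _ h'
  · exact List.mem_append_right _ (List.mem_append_left _ h')

/-! pfArgs / pfEqs / pfClause -/

variable [DecidableEq P]

theorem pfArgs_pred (eqP : P) (b j : ℕ) (a : Atom P F) : (pfArgs eqP b j a).pred = a.pred := by
  unfold pfArgs; split <;> rfl

theorem pfArgs_len (eqP : P) (b j : ℕ) (a : Atom P F) :
    (pfArgs eqP b j a).args.length = a.args.length := by
  unfold pfArgs; split
  · rfl
  · simp

theorem pfArgs_of_eq {eqP : P} {a : Atom P F} (h : a.pred = eqP) (b j : ℕ) :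
    pfArgs eqP b j a = a := by
  unfold pfArgs; rw [if_pos h]

theorem pfArgs_of_ne {eqP : P} {a : Atom P F} (h : ¬ a.pred = eqP) (b j : ℕ) :
    pfArgs eqP b j a =
      ⟨a.pred, a.args.mapIdx (fun i t => if t.isPF then Term.var (b + Nat.pair j i) else t)⟩ := by
  unfold pfArgs; rw [if_neg h]

theorem pfArgs_hasPF {eqP : P} {a : Atom P F} (h : ¬ a.pred = eqP) (b j : ℕ) :
    (pfArgs eqP b j a).hasPF = false := by
  rw [pfArgs_of_ne h]
  simp only [Atom.hasPF, List.any_eq_false]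
  intro t ht
  rcases List.mem_iff_getElem.1 ht with ⟨i, hi, rfl⟩
  rw [List.getElem_mapIdx]
  split
  · simp [Term.isPF]
  · simp_all

theorem mem_pfEqs {eqP : P} {b j : ℕ} {a : Atom P F} {e : Atom P F}
    (h : e ∈ pfEqs eqP b j a) :
    ¬ a.pred = eqP ∧ ∃ i, ∃ hi : i < a.args.length, (a.args[i]).isPF = true ∧
      e = eqAtom eqP (a.args[i]) (Term.var (b + Nat.pair j i)) := by
  unfold pfEqs at h
  split at h
  · simp at h
  · next hne =>
    refine ⟨hne, ?_⟩
    rcases List.mem_filterMap.1 h with ⟨⟨i, t⟩, hmem, hsome⟩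
    rcases List.mem_iff_getElem.1 hmem with ⟨k, hk, hget⟩
    rw [List.getElem_mapIdx] at hget
    have hk' : k < a.args.length := by simpa using hk
    have hpair : (k, a.args[k]) = (i, t) := by simpa using hget
    obtain ⟨rfl, rfl⟩ := Prod.mk.inj hpair
    dsimp only at hsome
    split at hsome
    · next hpf =>
      exact ⟨k, hk', hpf, (Option.some.inj hsome).symm⟩
    · simp at hsome

theorem pfEqs_mem {eqP : P} {b j : ℕ} {a : Atom P F} {i : ℕ} (hi : i < a.args.length)
    (hne : ¬ a.pred = eqP) (hpf : (a.args[i]).isPF = true) :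
    eqAtom eqP (a.args[i]) (Term.var (b + Nat.pair j i)) ∈ pfEqs eqP b j a := by
  unfold pfEqs
  rw [if_neg hne]
  apply List.mem_filterMap.2
  refine ⟨(i, a.args[i]), ?_, by rw [if_pos hpf]⟩
  rcases List.mem_iff_getElem.1 (List.getElem_mem hi) with ⟨k, hk, hget⟩
  apply List.mem_iff_getElem.2
  exact ⟨i, by simpa using hi, by rw [List.getElem_mapIdx]⟩

@[simp] theorem pfClause_heads (eqP : P) (C : Clause P F) :
    (pfClause eqP C).heads = C.heads := rfl

theorem pfClause_body_mem1 {eqP : P} {C : Clause P F} {j : ℕ} (hj : j < C.body.length) :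
    pfArgs eqP (C.maxVar + 1) j (C.body[j]) ∈ (pfClause eqP C).body := by
  apply List.mem_append_left
  apply List.mem_iff_getElem.2
  exact ⟨j, by simpa using hj, by rw [List.getElem_mapIdx]⟩

theorem pfClause_body_mem2 {eqP : P} {C : Clause P F} {j : ℕ} (hj : j < C.body.length)
    {e : Atom P F} (he : e ∈ pfEqs eqP (C.maxVar + 1) j (C.body[j])) :
    e ∈ (pfClause eqP C).body := by
  apply List.mem_append_right
  apply List.mem_flatten.2
  refine ⟨pfEqs eqP (C.maxVar + 1) j (C.body[j]), ?_, he⟩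
  apply List.mem_iff_getElem.2
  exact ⟨j, by simpa using hj, by rw [List.getElem_mapIdx]⟩

theorem pfClause_body_cases {eqP : P} {C : Clause P F} {b : Atom P F}
    (h : b ∈ (pfClause eqP C).body) :
    (∃ j, ∃ hj : j < C.body.length, b = pfArgs eqP (C.maxVar + 1) j (C.body[j])) ∨
    (∃ j, ∃ hj : j < C.body.length, b ∈ pfEqs eqP (C.maxVar + 1) j (C.body[j])) := by
  rcases List.mem_append.1 h with h' | h'
  · rcases List.mem_iff_getElem.1 h' with ⟨j, hj, hget⟩
    have hj' : j < C.body.length := by simpa using hj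
    left
    exact ⟨j, hj', by rw [List.getElem_mapIdx] at hget; exact hget.symm⟩
  · rcases List.mem_flatten.1 h' with ⟨l, hl, hbl⟩
    rcases List.mem_iff_getElem.1 hl with ⟨j, hj, hget⟩
    have hj' : j < C.body.length := by simpa using hj
    right
    refine ⟨j, hj', ?_⟩
    rw [List.getElem_mapIdx] at hget
    rwa [← hget] at hbl

/-! bsClause -/

@[simp] theorem barAtom_pred (bar : P → P) (a : Atom P F) : (barAtom bar a).pred = bar a.pred := rfl

@[simp] theorem barAtom_args (bar : P → P) (a : Atom P F) : (barAtom bar a).args = a.args := rfl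

theorem barAtom_subst (bar : P → P) (a : Atom P F) (g : ℕ → Term F) :
    (barAtom bar a).subst g = barAtom bar (a.subst g) := rfl

theorem bsClause_refl (bar : P → P) (eqP : P) :
    bsClause bar (reflClause eqP : Clause P F) = reflClause eqP := by
  simp [bsClause, reflClause]

theorem bsClause_body_sub {bar : P → P} {C : Clause P F} {a : Atom P F}
    (h : a ∈ (bsClause bar C).body) : a ∈ C.body :=
  (List.mem_filter.1 h).1

theorem mem_bsClause_body {bar : P → P} {C : Clause P F} {a : Atom P F}
    (h : a ∈ C.body) (hpf : a.hasPF = false) : a ∈ (bsClause bar C).body :=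
  List.mem_filter.2 ⟨h, by simp [hpf]⟩

theorem mem_bsClause_heads_left {bar : P → P} {C : Clause P F} {a : Atom P F}
    (h : a ∈ C.heads) : a ∈ (bsClause bar C).heads :=
  List.mem_append_left _ h

theorem mem_bsClause_heads_right {bar : P → P} {C : Clause P F} {a : Atom P F}
    (h : a ∈ C.body) (hpf : a.hasPF = true) : barAtom bar a ∈ (bsClause bar C).heads :=
  List.mem_append_right _ (List.mem_map_of_mem (List.mem_filter.2 ⟨h, by simp [hpf]⟩))

theorem bsClause_heads_cases {bar : P → P} {C : Clause P F} {a : Atom P F}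
    (h : a ∈ (bsClause bar C).heads) :
    a ∈ C.heads ∨ ∃ b ∈ C.body, b.hasPF = true ∧ a = barAtom bar b := by
  rcases List.mem_append.1 h with h' | h'
  · exact Or.inl h'
  · rcases List.mem_map.1 h' with ⟨b, hb, rfl⟩
    have := List.mem_filter.1 hb
    exact Or.inr ⟨b, this.1, by simpa using this.2, rfl⟩

/-! membership in transformed sets -/

variable [DecidableEq F]

theorem mem_rr_of_mem {σ : Sig P F} {domP : P} {c : F} {M : Set (Clause P F)}
    {C : Clause P F} (h : C ∈ M) : rangeRestrictClause domP C ∈ rr σ domP c M :=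
  Or.inl (Or.inl (Set.mem_image_of_mem _ (Or.inl (Or.inl h))))

theorem mem_rr_domc {σ : Sig P F} {domP : P} {c : F} {M : Set (Clause P F)} :
    rangeRestrictClause domP (domcClause domP c) ∈ rr σ domP c M :=
  Or.inl (Or.inl (Set.mem_image_of_mem _ (Or.inl (Or.inr rfl))))

theorem mem_rr_step4 {σ : Sig P F} {domP : P} {c : F} {M : Set (Clause P F)}
    {pn : P × ℕ} (h : pn ∈ σ.preds) {i : ℕ} (hi : i < pn.2) :
    (⟨[domAtom domP (Term.var i)], [⟨pn.1, rangeVars pn.2⟩]⟩ : Clause P F) ∈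
      rr σ domP c M :=
  Or.inl (Or.inr ⟨pn, h, i, hi, rfl⟩)

theorem mem_crr_of_mem {σ : Sig P F} {domP : P} {c : F} {M : Set (Clause P F)}
    {C : Clause P F} (h : C ∈ M) : rangeRestrictClause domP C ∈ crr σ domP c M :=
  Or.inl (Set.mem_image_of_mem _ (Or.inl h))

theorem mem_crr_domc {σ : Sig P F} {domP : P} {c : F} {M : Set (Clause P F)} :
    rangeRestrictClause domP (domcClause domP c) ∈ crr σ domP c M :=
  Or.inl (Set.mem_image_of_mem _ (Or.inr rfl))

theorem mem_crr_step3 {σ : Sig P F} {domP : P} {c : F} {M : Set (Clause P F)}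
    {fn : F × ℕ} (h : fn ∈ σ.funcs) :
    (⟨[domAtom domP (Term.app fn.1 (rangeVars fn.2))],
      (List.range fn.2).map (fun i => domAtom domP (Term.var i))⟩ : Clause P F) ∈
      crr σ domP c M :=
  Or.inr ⟨fn, h, rfl⟩

theorem mem_sh_bs {eqP : P} {bar : P → P} {M : Set (Clause P F)} {C : Clause P F}
    (h : C ∈ pf eqP M) : bsClause bar C ∈ sh eqP bar M :=
  Or.inl (Set.mem_image_of_mem _ h)

theorem mem_sh_cons {eqP : P} {bar : P → P} {M : Set (Clause P F)} {pn : P × ℕ}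
    (h : pn ∈ shiftedPreds (pf eqP M)) :
    (⟨[], [⟨pn.1, rangeVars pn.2⟩, ⟨bar pn.1, rangeVars pn.2⟩]⟩ : Clause P F) ∈
      sh eqP bar M :=
  Or.inr ⟨pn, h, rfl⟩

theorem mem_pf_of_mem {eqP : P} {M : Set (Clause P F)} {C : Clause P F} (h : C ∈ M) :
    pfClause eqP C ∈ pf eqP M :=
  Or.inl (Set.mem_image_of_mem _ h)

theorem mem_pf_refl {eqP : P} {M : Set (Clause P F)} :
    (reflClause eqP : Clause P F) ∈ pf eqP M := Or.inr rfl

theorem sh_cases {eqP : P} {bar : P → P} {M : Set (Clause P F)} {C : Clause P F}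
    (h : C ∈ sh eqP bar M) :
    (∃ C₀ ∈ M, C = bsClause bar (pfClause eqP C₀)) ∨ C = reflClause eqP ∨
      (∃ pn ∈ shiftedPreds (pf eqP M),
        C = ⟨[], [⟨pn.1, rangeVars pn.2⟩, ⟨bar pn.1, rangeVars pn.2⟩]⟩) := by
  rcases h with h | h
  · rcases h with ⟨C', hC', rfl⟩
    rcases hC' with ⟨C₀, hC₀, rfl⟩ | h'
    · exact Or.inl ⟨C₀, hC₀, rfl⟩
    · rcases h' with rfl
      exact Or.inr (Or.inl (bsClause_refl bar eqP))
  · rcases h with ⟨pn, hpn, rfl⟩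
    exact Or.inr (Or.inr ⟨pn, hpn, rfl⟩)

theorem applyBlock_supset (σ : Sig P F) (domP eqP neqP subP : P) (τ : BlockTr)
    (M' : Set (Clause P F)) : M' ⊆ applyBlock σ domP eqP neqP subP τ M' := by
  cases τ with
  | id => exact fun _ h => h
  | blsd => exact fun _ h => Or.inl (Or.inl h)
  | blsp => exact fun _ h => Or.inl (Or.inl (Or.inl h))
  | blud => exact fun _ h => Or.inl h
  | blup => exact fun _ h => Or.inl (Or.inl h)

theorem atom_mk_isGround {p : P} {args : List (Term F)} (h : ∀ t ∈ args, t.IsGround) :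
    (⟨p, args⟩ : Atom P F).IsGround := by
  simp only [Atom.IsGround, Atom.vars, List.flatMap_eq_nil_iff]
  exact h

@[simp] theorem Atom.subst_pred (a : Atom P F) (g : ℕ → Term F) : (a.subst g).pred = a.pred := rfl

@[simp] theorem Atom.subst_args (a : Atom P F) (g : ℕ → Term F) :
    (a.subst g).args = a.args.map (Term.subst g) := rfl

theorem map_range_getD {α β : Type _} (l : List α) (d : α) (f : α → β) :
    (List.range l.length).map (fun i => f (l.getD i d)) = l.map f := by
  apply List.ext_getElem
  · simp
  · intro n h1 h2
    have hn : n < l.length := by simpa using h2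
    rw [List.getElem_map, List.getElem_map, List.getElem_range, List.getD_eq_getElem l d hn]

theorem eqAtom_isGround {eqP : P} {s t : Term F} (hs : s.IsGround) (ht : t.IsGround) :
    (eqAtom eqP s t).IsGround := by
  apply atom_mk_isGround
  intro u hu
  rcases List.mem_cons.1 hu with rfl | hu'
  · exact hs
  · rcases List.mem_singleton.1 hu' with rfl
    exact ht

theorem pf_body_preds {eqP : P} {C : Clause P F} {b : Atom P F}
    (h : b ∈ (pfClause eqP C).body) :
    (b.pred, b.args.length) ∈ C.preds ∨ (b.pred, b.args.length) = (eqP, 2) := by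
  rcases pfClause_body_cases h with ⟨j, hj, rfl⟩ | ⟨j, hj, hmem⟩
  · left
    rw [pfArgs_pred, pfArgs_len]
    exact mem_preds_of_atom (List.mem_append_right _ (List.getElem_mem hj))
  · rcases mem_pfEqs hmem with ⟨hne, i, hi, hpf, rfl⟩
    right
    simp [eqAtom]

theorem shiftedPreds_pf_sub {eqP : P} {M : Set (Clause P F)} {pn : P × ℕ}
    (h : pn ∈ shiftedPreds (pf eqP M)) : pn ∈ predsOf M ∨ pn = (eqP, 2) := by
  rcases h with ⟨C', hC', a, ha, hpf, rfl⟩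
  rcases hC' with ⟨C₀, hC₀, rfl⟩ | hC'
  · rcases pf_body_preds ha with h' | h'
    · exact Or.inl ⟨C₀, hC₀, h'⟩
    · exact Or.inr h'
  · rcases hC' with rfl
    simp [reflClause] at ha

/-! ### Soundness -/

section Soundness

variable (σ : Sig P F) (domP : P) (c : F) (eqP neqP subP : P) (bar : P → P)
variable (M : Set (Clause P F)) (I : Set (Atom P F))

/-- The interpretation witnessing soundness of the transformations. -/
noncomputable def soundInt : Set (Atom P F) :=
  {A | ((A.pred, A.args.length) ∈ predsOf M ∨ (A.pred, A.args.length) = (eqP, 2)) ∧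
        A.IsGround ∧ (⟨A.pred, A.args.map (kol (funcsOf M) c)⟩ : Atom P F) ∈ I} ∪
  {A | A.pred = domP ∧ A.args.length = 1 ∧ A.IsGround} ∪
  {A | A.pred = subP ∧ A.args.length = 2 ∧ A.IsGround} ∪
  {A | A.pred = neqP ∧ A.args.length = 2 ∧ A.IsGround ∧
        (⟨eqP, A.args.map (kol (funcsOf M) c)⟩ : Atom P F) ∉ I} ∪
  {A | ∃ q, A.pred = bar q ∧
        ((q, A.args.length) ∈ predsOf M ∨ (q, A.args.length) = (eqP, 2)) ∧ A.IsGround ∧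
        (⟨q, A.args.map (kol (funcsOf M) c)⟩ : Atom P F) ∉ I}

theorem soundInt_ground : ∀ A ∈ soundInt domP c eqP neqP subP bar M I, A.IsGround := by
  intro A hA
  rcases hA with ((((h | h) | h) | h) | h)
  · exact h.2.1
  · exact h.2.2
  · exact h.2.2
  · exact h.2.2.1
  · rcases h with ⟨q, _, _, hg, _⟩; exact hg

/-- All hypotheses needed for the soundness construction. -/
structure SoundCtx (σ : Sig P F) (domP : P) (c : F) (eqP neqP subP : P) (bar : P → P)
    (M : Set (Clause P F)) (I : Set (Atom P F)) : Prop where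
  hwf : WFSet σ M
  hdomFresh : ∀ n, (domP, n) ∉ σ.preds
  heq : (eqP, 2) ∈ σ.preds
  hneqFresh : ∀ n, (neqP, n) ∉ σ.preds
  hneqDom : neqP ≠ domP
  hsubFresh : ∀ n, (subP, n) ∉ σ.preds
  hsubDom : subP ≠ domP
  hsubNeq : subP ≠ neqP
  hbarInj : Function.Injective bar
  hbarFresh : ∀ p n, (bar p, n) ∉ σ.preds
  hbarNew : ∀ p, bar p ≠ p ∧ bar p ≠ domP ∧ bar p ≠ neqP ∧ bar p ≠ subP
  hR : EqRefl I eqP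
  hS : EqSym I eqP
  hT : EqTrans I eqP
  hFC : ∀ fn ∈ funcsOf M, FCong I eqP fn
  hPC : ∀ pn ∈ predsOf M, PCong I eqP pn
  hM : ∀ C ∈ M, satClause I C

variable {σ domP c eqP neqP subP bar M I}
variable (ctx : SoundCtx σ domP c eqP neqP subP bar M I)

include ctx

theorem SoundCtx.predsOf_sub {pn : P × ℕ} (h : pn ∈ predsOf M) : pn ∈ σ.preds := by
  rcases h with ⟨C, hC, hpn⟩
  exact (ctx.hwf C hC).1 pn hpn

theorem SoundCtx.funcsOf_sub {fn : F × ℕ} (h : fn ∈ funcsOf M) : fn ∈ σ.funcs := by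
  rcases h with ⟨C, hC, hfn⟩
  exact (ctx.hwf C hC).2 fn hfn

theorem SoundCtx.Gd_sub {pn : P × ℕ} (h : pn ∈ predsOf M ∨ pn = (eqP, 2)) : pn ∈ σ.preds := by
  rcases h with h | rfl
  · exact ctx.predsOf_sub h
  · exact ctx.heq

theorem SoundCtx.inv_base {A : Atom P F} (hA : A ∈ soundInt domP c eqP neqP subP bar M I)
    (hp : (A.pred, A.args.length) ∈ σ.preds) :
    ((A.pred, A.args.length) ∈ predsOf M ∨ (A.pred, A.args.length) = (eqP, 2)) ∧
      A.IsGround ∧ (⟨A.pred, A.args.map (kol (funcsOf M) c)⟩ : Atom P F) ∈ I := by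
  rcases hA with ((((h | h) | h) | h) | h)
  · exact h
  · rw [h.1] at hp; exact absurd hp (ctx.hdomFresh _)
  · rw [h.1] at hp; exact absurd hp (ctx.hsubFresh _)
  · rw [h.1] at hp; exact absurd hp (ctx.hneqFresh _)
  · rcases h with ⟨q, hq, _, _, _⟩
    rw [hq] at hp
    exact absurd hp (ctx.hbarFresh _ _)

theorem SoundCtx.inv_eq {s t : Term F}
    (hA : eqAtom eqP s t ∈ soundInt domP c eqP neqP subP bar M I) :
    (⟨eqP, [kol (funcsOf M) c s, kol (funcsOf M) c t]⟩ : Atom P F) ∈ I := by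
  have hp : ((eqAtom eqP s t).pred, (eqAtom eqP s t).args.length) ∈ σ.preds := by
    simpa [eqAtom] using ctx.heq
  have := (ctx.inv_base hA hp).2.2
  simpa [eqAtom] using this

theorem SoundCtx.inv_neq {s t : Term F}
    (hA : eqAtom neqP s t ∈ soundInt domP c eqP neqP subP bar M I) :
    (⟨eqP, [kol (funcsOf M) c s, kol (funcsOf M) c t]⟩ : Atom P F) ∉ I := by
  rcases hA with ((((h | h) | h) | h) | h)
  · have hlen : ((eqAtom neqP s t).pred, (eqAtom neqP s t).args.length) = (neqP, 2) := by
      simp [eqAtom]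
    rcases h.1 with h' | h'
    · rw [hlen] at h'
      exact absurd (ctx.predsOf_sub h') (ctx.hneqFresh 2)
    · rw [hlen] at h'
      have : neqP = eqP := congrArg Prod.fst h'
      subst this
      exact absurd ctx.heq (ctx.hneqFresh 2)
  · exact absurd h.1 ctx.hneqDom
  · exact absurd h.1.symm ctx.hsubNeq
  · simpa [eqAtom] using h.2.2.2
  · rcases h with ⟨q, hq, _, _, _⟩
    exact absurd hq.symm (ctx.hbarNew q).2.2.1

theorem SoundCtx.inv_bar {q : P} {args : List (Term F)}
    (hA : (⟨bar q, args⟩ : Atom P F) ∈ soundInt domP c eqP neqP subP bar M I) :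
    ((q, args.length) ∈ predsOf M ∨ (q, args.length) = (eqP, 2)) ∧
      (⟨q, args.map (kol (funcsOf M) c)⟩ : Atom P F) ∉ I := by
  rcases hA with ((((h | h) | h) | h) | h)
  · rcases h.1 with h' | h'
    · exact absurd (ctx.predsOf_sub h') (ctx.hbarFresh q _)
    · have hb : bar q = eqP := congrArg Prod.fst h'
      have := ctx.hbarFresh q 2
      rw [hb] at this
      exact absurd ctx.heq this
  · exact absurd h.1 (ctx.hbarNew q).2.1
  · exact absurd h.1 (ctx.hbarNew q).2.2.2
  · exact absurd h.1 (ctx.hbarNew q).2.2.1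
  · rcases h with ⟨q', hq', hGd, _, hnot⟩
    have : q' = q := ctx.hbarInj hq'.symm
    subst this
    exact ⟨by simpa using hGd, by simpa using hnot⟩

theorem soundInt_base_intro {A : Atom P F}
    (hGd : (A.pred, A.args.length) ∈ predsOf M ∨ (A.pred, A.args.length) = (eqP, 2))
    (hg : A.IsGround) (hI : (⟨A.pred, A.args.map (kol (funcsOf M) c)⟩ : Atom P F) ∈ I) :
    A ∈ soundInt domP c eqP neqP subP bar M I :=
  Or.inl (Or.inl (Or.inl (Or.inl ⟨hGd, hg, hI⟩)))

theorem soundInt_dom_intro {t : Term F} (hg : t.IsGround) :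
    domAtom domP t ∈ soundInt domP c eqP neqP subP bar M I :=
  Or.inl (Or.inl (Or.inl (Or.inr ⟨rfl, rfl, atom_mk_isGround (by
    intro u hu
    rcases List.mem_singleton.1 hu with rfl
    exact hg)⟩)))

theorem soundInt_sub_intro {s t : Term F} (hs : s.IsGround) (ht : t.IsGround) :
    subAtom subP s t ∈ soundInt domP c eqP neqP subP bar M I :=
  Or.inl (Or.inl (Or.inr ⟨rfl, rfl, eqAtom_isGround hs ht⟩))

theorem soundInt_neq_intro {s t : Term F} (hs : s.IsGround) (ht : t.IsGround)
    (h : (⟨eqP, [kol (funcsOf M) c s, kol (funcsOf M) c t]⟩ : Atom P F) ∉ I) :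
    eqAtom neqP s t ∈ soundInt domP c eqP neqP subP bar M I :=
  Or.inl (Or.inr ⟨rfl, rfl, eqAtom_isGround hs ht, by simpa [eqAtom] using h⟩)

theorem soundInt_bar_intro {q : P} {args : List (Term F)}
    (hGd : (q, args.length) ∈ predsOf M ∨ (q, args.length) = (eqP, 2))
    (hg : (⟨bar q, args⟩ : Atom P F).IsGround)
    (h : (⟨q, args.map (kol (funcsOf M) c)⟩ : Atom P F) ∉ I) :
    (⟨bar q, args⟩ : Atom P F) ∈ soundInt domP c eqP neqP subP bar M I :=
  Or.inr ⟨q, rfl, hGd, hg, h⟩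

theorem SoundCtx.pcong_Gd {pn : P × ℕ} (h : pn ∈ predsOf M ∨ pn = (eqP, 2)) :
    PCong I eqP pn := by
  rcases h with h | rfl
  · exact ctx.hPC pn h
  · intro s t hs ht hst hbase
    have h2 : (List.range 2).map s = [s 0, s 1] := by simp [List.range_succ]
    have h2' : (List.range 2).map t = [t 0, t 1] := by simp [List.range_succ]
    rw [h2] at hbase
    rw [h2']
    have e01 : eqAtom eqP (s 0) (s 1) ∈ I := hbase
    have e0 : eqAtom eqP (s 0) (t 0) ∈ I := hst 0 (by norm_num)
    have e1 : eqAtom eqP (s 1) (t 1) ∈ I := hst 1 (by norm_num)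
    have h01 : eqAtom eqP (t 0) (s 1) ∈ I :=
      ctx.hT _ _ _ (ht 0) (hs 0) (hs 1) (ctx.hS _ _ (hs 0) (ht 0) e0) e01
    exact ctx.hT _ _ _ (ht 0) (hs 1) (ht 1) h01 e1

theorem SoundCtx.sR : EqRefl (soundInt domP c eqP neqP subP bar M I) eqP := by
  intro s hs
  apply soundInt_base_intro ctx
  · exact Or.inr (by simp [eqAtom])
  · exact eqAtom_isGround hs hs
  · simpa [eqAtom] using ctx.hR _ (kol_isGround hs)

theorem SoundCtx.sS : EqSym (soundInt domP c eqP neqP subP bar M I) eqP := by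
  intro s t hs ht h
  have hI := ctx.inv_eq h
  apply soundInt_base_intro ctx
  · exact Or.inr (by simp [eqAtom])
  · exact eqAtom_isGround ht hs
  · simpa [eqAtom] using
      ctx.hS _ _ (kol_isGround hs) (kol_isGround ht) hI

theorem SoundCtx.sT : EqTrans (soundInt domP c eqP neqP subP bar M I) eqP := by
  intro s t u hs ht hu h1 h2
  have hI1 := ctx.inv_eq h1
  have hI2 := ctx.inv_eq h2
  apply soundInt_base_intro ctx
  · exact Or.inr (by simp [eqAtom])
  · exact eqAtom_isGround hs hu
  · simpa [eqAtom] using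
      ctx.hT _ _ _ (kol_isGround hs) (kol_isGround ht) (kol_isGround hu) hI1 hI2

theorem SoundCtx.sFC : ∀ fn, FCong (soundInt domP c eqP neqP subP bar M I) eqP fn := by
  intro fn s t hs ht hst
  have hg1 : (Term.app fn.1 ((List.range fn.2).map s)).IsGround := by
    rw [Term.isGround_app]
    intro u hu
    rcases List.mem_map.1 hu with ⟨i, _, rfl⟩
    exact hs i
  have hg2 : (Term.app fn.1 ((List.range fn.2).map t)).IsGround := by
    rw [Term.isGround_app]
    intro u hu
    rcases List.mem_map.1 hu with ⟨i, _, rfl⟩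
    exact ht i
  apply soundInt_base_intro ctx
  · exact Or.inr (by simp [eqAtom])
  · exact eqAtom_isGround hg1 hg2
  · by_cases hf : fn ∈ funcsOf M
    · have hIcong := ctx.hFC fn hf (fun i => kol (funcsOf M) c (s i))
        (fun i => kol (funcsOf M) c (t i)) (fun i => kol_isGround (hs i))
        (fun i => kol_isGround (ht i))
        (fun i hi => by simpa [eqAtom] using ctx.inv_eq (hst i hi))
      have e1 : kol (funcsOf M) c (Term.app fn.1 ((List.range fn.2).map s)) =
          Term.app fn.1 ((List.range fn.2).map (fun i => kol (funcsOf M) c (s i))) := by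
        rw [kol_app_pos (by simpa using hf), List.map_map]
        rfl
      have e2 : kol (funcsOf M) c (Term.app fn.1 ((List.range fn.2).map t)) =
          Term.app fn.1 ((List.range fn.2).map (fun i => kol (funcsOf M) c (t i))) := by
        rw [kol_app_pos (by simpa using hf), List.map_map]
        rfl
      simp only [eqAtom, List.map_cons, List.map_nil]
      rw [e1, e2]
      exact hIcong
    · have e1 : kol (funcsOf M) c (Term.app fn.1 ((List.range fn.2).map s)) =
          Term.app c [] := kol_app_neg (by simpa using hf)
      have e2 : kol (funcsOf M) c (Term.app fn.1 ((List.range fn.2).map t)) =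
          Term.app c [] := kol_app_neg (by simpa using hf)
      simp only [eqAtom, List.map_cons, List.map_nil]
      rw [e1, e2]
      exact ctx.hR _ (by simp [Term.IsGround])

theorem SoundCtx.sPC : ∀ pn, PCong (soundInt domP c eqP neqP subP bar M I) eqP pn := by
  intro pn s t hs ht hst hbase
  have hkeq : ∀ i, i < pn.2 →
      eqAtom eqP (kol (funcsOf M) c (s i)) (kol (funcsOf M) c (t i)) ∈ I := by
    intro i hi
    simpa [eqAtom] using ctx.inv_eq (hst i hi)
  have hkeq' : ∀ i, i < pn.2 →
      eqAtom eqP (kol (funcsOf M) c (t i)) (kol (funcsOf M) c (s i)) ∈ I := by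
    intro i hi
    exact ctx.hS _ _ (kol_isGround (hs i)) (kol_isGround (ht i)) (hkeq i hi)
  have hgt : (⟨pn.1, (List.range pn.2).map t⟩ : Atom P F).IsGround := by
    apply atom_mk_isGround
    intro u hu
    rcases List.mem_map.1 hu with ⟨i, _, rfl⟩
    exact ht i
  have hmapk : ∀ (u : ℕ → Term F),
      ((List.range pn.2).map u).map (kol (funcsOf M) c) =
        (List.range pn.2).map (fun i => kol (funcsOf M) c (u i)) := by
    intro u
    rw [List.map_map]
    rfl
  rcases hbase with ((((h | h) | h) | h) | h)
  · apply soundInt_base_intro ctx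
    · simpa using h.1
    · exact hgt
    · have hbI : (⟨pn.1, (List.range pn.2).map (fun i => kol (funcsOf M) c (s i))⟩ :
          Atom P F) ∈ I := by
        rw [← hmapk s]
        exact h.2.2
      have := ctx.pcong_Gd (pn := (pn.1, pn.2)) (by simpa using h.1)
        (fun i => kol (funcsOf M) c (s i)) (fun i => kol (funcsOf M) c (t i))
        (fun i => kol_isGround (hs i)) (fun i => kol_isGround (ht i)) hkeq hbI
      simpa [hmapk t] using this
  · refine Or.inl (Or.inl (Or.inl (Or.inr ⟨h.1, by simpa using h.2.1, hgt⟩)))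
  · refine Or.inl (Or.inl (Or.inr ⟨h.1, by simpa using h.2.1, hgt⟩))
  · -- neq part
    have hn2 : pn.2 = 2 := by simpa using h.2.1
    refine Or.inl (Or.inr ⟨h.1, by simpa using h.2.1, hgt, ?_⟩)
    intro hin
    apply h.2.2.2
    rw [hmapk s]
    rw [hmapk t] at hin
    have hr2 : ∀ (u : ℕ → Term F), (List.range pn.2).map u = [u 0, u 1] := by
      intro u
      rw [hn2]
      simp [List.range_succ]
    rw [hr2] at hin ⊢
    have h0 := hkeq 0 (by omega)
    have h1 := hkeq 1 (by omega)
    have htt : eqAtom eqP (kol (funcsOf M) c (t 0)) (kol (funcsOf M) c (t 1)) ∈ I := hin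
    have step1 : eqAtom eqP (kol (funcsOf M) c (s 0)) (kol (funcsOf M) c (t 1)) ∈ I :=
      ctx.hT _ _ _ (kol_isGround (hs 0)) (kol_isGround (ht 0)) (kol_isGround (ht 1)) h0 htt
    exact ctx.hT _ _ _ (kol_isGround (hs 0)) (kol_isGround (ht 1)) (kol_isGround (hs 1)) step1
      (ctx.hS _ _ (kol_isGround (hs 1)) (kol_isGround (ht 1)) h1)
  · rcases h with ⟨q, hq, hGd, _, hnot⟩
    refine Or.inr ⟨q, hq, by simpa using hGd, hgt, ?_⟩
    intro hin
    apply hnot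
    rw [hmapk s]
    rw [hmapk t] at hin
    exact ctx.pcong_Gd (pn := (q, pn.2)) (by simpa using hGd)
      (fun i => kol (funcsOf M) c (t i)) (fun i => kol (funcsOf M) c (s i))
      (fun i => kol_isGround (ht i)) (fun i => kol_isGround (hs i)) hkeq' hin

theorem SoundCtx.sat_eax (Ps : Set (P × ℕ)) (Fs : Set (F × ℕ)) :
    ∀ C ∈ EAX eqP Ps Fs, satClause (soundInt domP c eqP neqP subP bar M I) C :=
  eax_satisfy Ps Fs ctx.sR ctx.sS ctx.sT (fun fn _ => ctx.sFC fn) (fun pn _ => ctx.sPC pn)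

theorem SoundCtx.sat_headDom (C : Clause P F) (t : Term F)
    (h : C.heads = [domAtom domP t]) :
    satClause (soundInt domP c eqP neqP subP bar M I) C := by
  intro g hg _
  refine ⟨domAtom domP t, by rw [h]; exact List.mem_singleton_self _, ?_⟩
  rw [domAtom_subst]
  exact soundInt_dom_intro ctx (Term.subst_isGround hg t)

theorem SoundCtx.sat_headSub (C : Clause P F) (u v : Term F)
    (h : C.heads = [subAtom subP u v]) :
    satClause (soundInt domP c eqP neqP subP bar M I) C := by
  intro g hg _
  refine ⟨subAtom subP u v, by rw [h]; exact List.mem_singleton_self _, ?_⟩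
  rw [subAtom_subst]
  exact soundInt_sub_intro ctx (Term.subst_isGround hg u) (Term.subst_isGround hg v)

theorem SoundCtx.sat_headSplit (C : Clause P F)
    (h : C.heads = blockSplitHead eqP neqP) :
    satClause (soundInt domP c eqP neqP subP bar M I) C := by
  classical
  intro g hg _
  by_cases hin :
      (⟨eqP, [kol (funcsOf M) c (g 0), kol (funcsOf M) c (g 1)]⟩ : Atom P F) ∈ I
  · refine ⟨eqAtom eqP (Term.var 0) (Term.var 1),
      by rw [h]; exact List.mem_cons_self, ?_⟩
    simp only [eqAtom_subst, Term.subst_var]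
    apply soundInt_base_intro ctx
    · exact Or.inr (by simp [eqAtom])
    · exact eqAtom_isGround (hg 0) (hg 1)
    · simpa [eqAtom] using hin
  · refine ⟨eqAtom neqP (Term.var 0) (Term.var 1),
      by rw [h]; exact List.mem_cons.2 (Or.inr (List.mem_singleton_self _)), ?_⟩
    simp only [eqAtom_subst, Term.subst_var]
    exact soundInt_neq_intro ctx (hg 0) (hg 1) hin

theorem SoundCtx.sat_reflHead (C : Clause P F)
    (h : C.heads = [eqAtom eqP (Term.var 0) (Term.var 0)]) :
    satClause (soundInt domP c eqP neqP subP bar M I) C := by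
  intro g hg _
  refine ⟨eqAtom eqP (Term.var 0) (Term.var 0),
    by rw [h]; exact List.mem_singleton_self _, ?_⟩
  simp only [eqAtom_subst, Term.subst_var]
  exact ctx.sR (g 0) (hg 0)

theorem SoundCtx.sat_eqNeqBot :
    satClause (soundInt domP c eqP neqP subP bar M I) (eqNeqBot eqP neqP) := by
  intro g hg hb
  exfalso
  have h1 := hb _ (List.mem_cons_self)
  have h2 := hb _ (List.mem_cons.2 (Or.inr (List.mem_singleton_self _)))
  simp only [eqAtom_subst, Term.subst_var] at h1 h2
  exact ctx.inv_neq h2 (ctx.inv_eq h1)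

theorem SoundCtx.sat_cons {pn : P × ℕ} (hpn : pn ∈ shiftedPreds (pf eqP M)) :
    satClause (soundInt domP c eqP neqP subP bar M I) (rangeRestrictClause domP
      ⟨[], [⟨pn.1, rangeVars pn.2⟩, ⟨bar pn.1, rangeVars pn.2⟩]⟩) := by
  intro g hg hb
  exfalso
  have h1 := hb _ (mem_rangeRestrictClause_body (List.mem_cons_self))
  have h2 := hb _ (mem_rangeRestrictClause_body
    (List.mem_cons.2 (Or.inr (List.mem_singleton_self _))))
  have hGd : pn ∈ predsOf M ∨ pn = (eqP, 2) := shiftedPreds_pf_sub hpn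
  have h2' := ctx.inv_bar (q := pn.1) (args := (rangeVars pn.2).map (Term.subst g)) h2
  have hp : ((pn.1 : P), ((rangeVars pn.2).map (Term.subst g)).length) ∈ σ.preds := by
    have hlen : ((rangeVars pn.2).map (Term.subst g)).length = pn.2 := by simp [rangeVars]
    rw [hlen]
    exact ctx.Gd_sub (by simpa using hGd)
  have h1' := ctx.inv_base (A := ⟨pn.1, (rangeVars pn.2).map (Term.subst g)⟩) h1 hp
  exact h2'.2 h1'.2.2

theorem SoundCtx.sat_rr {C : Clause P F} (hC : C ∈ M) :
    satClause (soundInt domP c eqP neqP subP bar M I) (rangeRestrictClause domP C) := by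
  intro g hg hb
  have hbody : ∀ a ∈ C.body, a.subst (fun v => kol (funcsOf M) c (g v)) ∈ I := by
    intro a ha
    have hmem := hb _ (mem_rangeRestrictClause_body ha)
    have hpa : ((a.subst g).pred, (a.subst g).args.length) ∈ σ.preds := by
      have he : ((a.subst g).pred, (a.subst g).args.length) = (a.pred, a.args.length) := by simp
      rw [he]
      exact ctx.predsOf_sub ⟨C, hC, mem_preds_of_atom (List.mem_append_right _ ha)⟩
    have h' := (ctx.inv_base hmem hpa).2.2
    have hfuncs : ∀ fn ∈ a.funcs, fn ∈ funcsOf M :=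
      fun fn hfn => ⟨C, hC, mem_funcs_of_atom (List.mem_append_right _ ha) hfn⟩
    rw [← kAtom_subst hfuncs]
    exact h'
  obtain ⟨a', ha', hin⟩ := ctx.hM C hC _ (groundSubst_kol hg) hbody
  refine ⟨a', by rw [rangeRestrictClause_heads]; exact ha', ?_⟩
  apply soundInt_base_intro ctx
  · left
    have he : ((a'.subst g).pred, (a'.subst g).args.length) = (a'.pred, a'.args.length) := by simp
    rw [he]
    exact ⟨C, hC, mem_preds_of_atom (List.mem_append_left _ ha')⟩
  · exact Atom.subst_isGround hg a'
  · have hfuncs : ∀ fn ∈ a'.funcs, fn ∈ funcsOf M :=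
      fun fn hfn => ⟨C, hC, mem_funcs_of_atom (List.mem_append_left _ ha') hfn⟩
    show kAtom (funcsOf M) c (a'.subst g) ∈ I
    rw [kAtom_subst hfuncs]
    exact hin

theorem SoundCtx.body_atom_transfer {C : Clause P F} (hC : C ∈ M) {g : ℕ → Term F}
    (hg : GroundSubst g)
    (hWk : ∀ b ∈ (pfClause eqP C).body,
      (⟨b.pred, (b.args.map (Term.subst g)).map (kol (funcsOf M) c)⟩ : Atom P F) ∈ I) :
    ∀ a ∈ C.body, a.subst (fun v => kol (funcsOf M) c (g v)) ∈ I := by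
  classical
  intro a ha
  obtain ⟨j, hj, rfl⟩ := List.mem_iff_getElem.1 ha
  have hfuncs : ∀ fn ∈ (C.body[j]).funcs, fn ∈ funcsOf M := fun fn hfn =>
    ⟨C, hC, mem_funcs_of_atom (List.mem_append_right _ (List.getElem_mem hj)) hfn⟩
  by_cases heqp : (C.body[j]).pred = eqP
  · have h1 := hWk _ (pfClause_body_mem1 (eqP := eqP) hj)
    rw [pfArgs_of_eq heqp] at h1
    rw [← kAtom_subst hfuncs]
    exact h1
  · have h1 := hWk _ (pfClause_body_mem1 (eqP := eqP) hj)
    rw [pfArgs_of_ne heqp] at h1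
    set a := C.body[j] with ha_def
    set base := C.maxVar + 1 with hbase_def
    set φ : ℕ → Term F → Term F :=
      fun i t => if t.isPF then Term.var (base + Nat.pair j i) else t with hφ
    set args' : List (Term F) := a.args.mapIdx φ with hargs'
    have hlen' : args'.length = a.args.length := by simp [hargs']
    set u : ℕ → Term F := fun i => kol (funcsOf M) c ((args'.getD i (Term.app c [])).subst g)
      with hu
    set w : ℕ → Term F := fun i => kol (funcsOf M) c ((a.args.getD i (Term.app c [])).subst g)
      with hw
    have hE1 : (List.range a.args.length).map u = (args'.map (Term.subst g)).map
        (kol (funcsOf M) c) := by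
      rw [← hlen']
      rw [show (List.range args'.length).map u =
        (List.range args'.length).map
          (fun i => (fun x => kol (funcsOf M) c (Term.subst g x)) (args'.getD i (Term.app c [])))
        from rfl]
      rw [map_range_getD args' (Term.app c []) (fun x => kol (funcsOf M) c (Term.subst g x))]
      rw [List.map_map]
      rfl
    have hE2 : (List.range a.args.length).map w = (a.args.map (Term.subst g)).map
        (kol (funcsOf M) c) := by
      rw [show (List.range a.args.length).map w =
        (List.range a.args.length).map
          (fun i => (fun x => kol (funcsOf M) c (Term.subst g x)) (a.args.getD i (Term.app c [])))
        from rfl]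
      rw [map_range_getD a.args (Term.app c []) (fun x => kol (funcsOf M) c (Term.subst g x))]
      rw [List.map_map]
      rfl
    have hprem : ∀ i, i < a.args.length → eqAtom eqP (u i) (w i) ∈ I := by
      intro i hi
      have hi' : i < args'.length := by rw [hlen']; exact hi
      have hgetu : args'.getD i (Term.app c []) = φ i (a.args[i]) := by
        rw [hargs', List.getD_eq_getElem _ _ (by simpa using hi), List.getElem_mapIdx]
      have hgetw : a.args.getD i (Term.app c []) = a.args[i] :=
        List.getD_eq_getElem _ _ hi
      by_cases hpf : (a.args[i]).isPF = true
      · have hφval : φ i (a.args[i]) = Term.var (base + Nat.pair j i) := by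
          rw [hφ]; simp [hpf]
        have he : eqAtom eqP (a.args[i]) (Term.var (base + Nat.pair j i)) ∈
            pfEqs eqP base j a := pfEqs_mem hi heqp hpf
        have hWke := hWk _ (pfClause_body_mem2 hj he)
        have : eqAtom eqP (kol (funcsOf M) c ((a.args[i]).subst g))
            (kol (funcsOf M) c (g (base + Nat.pair j i))) ∈ I := by
          simpa [eqAtom] using hWke
        have hsym := ctx.hS _ _
          (kol_isGround (Term.subst_isGround hg _)) (kol_isGround (hg _)) this
        rw [hu, hw]
        simp only [hgetu, hgetw, hφval, Term.subst_var]
        exact hsym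
      · have hφval : φ i (a.args[i]) = a.args[i] := by
          rw [hφ]; simp [hpf]
        rw [hu, hw]
        simp only [hgetu, hgetw, hφval]
        exact ctx.hR _ (kol_isGround (Term.subst_isGround hg _))
    have hbase' : (⟨a.pred, (List.range a.args.length).map u⟩ : Atom P F) ∈ I := by
      rw [hE1]
      exact h1
    have hconc := ctx.pcong_Gd (pn := (a.pred, a.args.length))
      (Or.inl ⟨C, hC, mem_preds_of_atom (List.mem_append_right _ (List.getElem_mem hj))⟩)
      u w (fun i => kol_isGround (Term.subst_isGround hg _))
      (fun i => kol_isGround (Term.subst_isGround hg _)) hprem hbase'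
    rw [hE2] at hconc
    rw [← kAtom_subst hfuncs]
    exact hconc

theorem SoundCtx.sat_shift {C : Clause P F} (hC : C ∈ M) :
    satClause (soundInt domP c eqP neqP subP bar M I)
      (rangeRestrictClause domP (bsClause bar (pfClause eqP C))) := by
  classical
  intro g hg hb
  by_cases hbar : ∃ b ∈ (pfClause eqP C).body, b.hasPF = true ∧
      (barAtom bar b).subst g ∈ soundInt domP c eqP neqP subP bar M I
  · rcases hbar with ⟨b, hbW, hpf, hmem⟩
    exact ⟨barAtom bar b, by
      rw [rangeRestrictClause_heads]
      exact mem_bsClause_heads_right hbW hpf, hmem⟩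
  · push_neg at hbar
    have hWk : ∀ b ∈ (pfClause eqP C).body,
        (⟨b.pred, (b.args.map (Term.subst g)).map (kol (funcsOf M) c)⟩ : Atom P F) ∈ I := by
      intro b hbW
      have hGdb' : (b.pred, b.args.length) ∈ predsOf M ∨ (b.pred, b.args.length) = (eqP, 2) := by
        rcases pf_body_preds hbW with h' | h'
        · exact Or.inl ⟨C, hC, h'⟩
        · exact Or.inr h'
      by_cases hpf : b.hasPF = true
      · by_contra hnot
        apply hbar b hbW hpf
        rw [barAtom_subst]
        exact soundInt_bar_intro ctx (q := b.pred) (args := (b.subst g).args)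
          (by simpa using hGdb')
          (atom_mk_isGround (by
            intro u hu
            rcases List.mem_map.1 (by simpa using hu) with ⟨t0, _, rfl⟩
            exact Term.subst_isGround hg t0))
          (by simpa using hnot)
      · have hb' := hb _ (mem_rangeRestrictClause_body
          (mem_bsClause_body hbW (by simpa using hpf)))
        have hp : ((b.subst g).pred, (b.subst g).args.length) ∈ σ.preds := by
          have he : ((b.subst g).pred, (b.subst g).args.length) = (b.pred, b.args.length) := by
            simp
          rw [he]
          exact ctx.Gd_sub hGdb'
        exact (ctx.inv_base hb' hp).2.2
    have hCbody := ctx.body_atom_transfer hC hg hWk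
    obtain ⟨a', ha', hin⟩ := ctx.hM C hC _ (groundSubst_kol hg) hCbody
    refine ⟨a', by
      rw [rangeRestrictClause_heads]
      exact mem_bsClause_heads_left ha', ?_⟩
    apply soundInt_base_intro ctx
    · left
      have he : ((a'.subst g).pred, (a'.subst g).args.length) = (a'.pred, a'.args.length) := by
        simp
      rw [he]
      exact ⟨C, hC, mem_preds_of_atom (List.mem_append_left _ ha')⟩
    · exact Atom.subst_isGround hg a'
    · have hfuncs : ∀ fn ∈ a'.funcs, fn ∈ funcsOf M :=
        fun fn hfn => ⟨C, hC, mem_funcs_of_atom (List.mem_append_left _ ha') hfn⟩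
      show kAtom (funcsOf M) c (a'.subst g) ∈ I
      rw [kAtom_subst hfuncs]
      exact hin

theorem SoundCtx.sat_rrSet {M₀ : Set (Clause P F)}
    (hM₀ : ∀ C₀ ∈ M₀, satClause (soundInt domP c eqP neqP subP bar M I)
      (rangeRestrictClause domP C₀)) :
    ∀ C ∈ rr σ domP c M₀, satClause (soundInt domP c eqP neqP subP bar M I) C := by
  intro C hC
  rcases hC with (himg | hst4) | hst5
  · rcases himg with ⟨C₀, hC₀, rfl⟩
    rcases hC₀ with (hM' | hdomc) | hstep2
    · exact hM₀ _ hM'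
    · rcases hdomc with rfl
      exact ctx.sat_headDom _ (cTerm c) rfl
    · rcases hstep2 with ⟨C1, hC1, a, ha, i, hvar, rfl⟩
      exact ctx.sat_headDom _ _ rfl
  · rcases hst4 with ⟨pn, hpn, i, hi, rfl⟩
    exact ctx.sat_headDom _ _ rfl
  · rcases hst5 with ⟨fn, hfn, i, hi, rfl⟩
    exact ctx.sat_headDom _ _ rfl

theorem SoundCtx.sat_crrSet {M₀ : Set (Clause P F)}
    (hM₀ : ∀ C₀ ∈ M₀, satClause (soundInt domP c eqP neqP subP bar M I)
      (rangeRestrictClause domP C₀)) :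
    ∀ C ∈ crr σ domP c M₀, satClause (soundInt domP c eqP neqP subP bar M I) C := by
  intro C hC
  rcases hC with himg | hst3
  · rcases himg with ⟨C₀, hC₀, rfl⟩
    rcases hC₀ with hM' | hdomc
    · exact hM₀ _ hM'
    · rcases hdomc with rfl
      exact ctx.sat_headDom _ (cTerm c) rfl
  · rcases hst3 with ⟨fn, hfn, rfl⟩
    exact ctx.sat_headDom _ _ rfl

theorem SoundCtx.sat_shSet :
    ∀ C₀ ∈ sh eqP bar M, satClause (soundInt domP c eqP neqP subP bar M I)
      (rangeRestrictClause domP C₀) := by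
  intro C₀ hC₀
  rcases sh_cases hC₀ with ⟨C1, hC1, rfl⟩ | h | ⟨pn, hpn, rfl⟩
  · exact ctx.sat_shift hC1
  · rcases h with rfl
    exact ctx.sat_reflHead _ rfl
  · exact ctx.sat_cons hpn

theorem SoundCtx.sat_base (b : BaseTr) :
    ∀ C ∈ applyBase σ domP c eqP bar b M,
      satClause (soundInt domP c eqP neqP subP bar M I) C := by
  cases b with
  | rr => exact ctx.sat_rrSet (fun C₀ h => ctx.sat_rr h)
  | shrr => exact ctx.sat_rrSet ctx.sat_shSet
  | crr => exact ctx.sat_crrSet (fun C₀ h => ctx.sat_rr h)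
  | shcrr => exact ctx.sat_crrSet ctx.sat_shSet

theorem SoundCtx.sat_subClauses :
    ∀ C ∈ subClauses domP subP σ.funcs,
      satClause (soundInt domP c eqP neqP subP bar M I) C := by
  intro C hC
  rcases hC with h | h
  · rcases h with rfl
    exact ctx.sat_headSub _ _ _ rfl
  · rcases h with ⟨fn, hfn, i, hi, rfl⟩
    exact ctx.sat_headSub _ _ _ rfl

theorem SoundCtx.sat_block (τ : BlockTr) (B : Set (Clause P F))
    (hB : ∀ C ∈ B, satClause (soundInt domP c eqP neqP subP bar M I) C) :
    ∀ C ∈ applyBlock σ domP eqP neqP subP τ B,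
      satClause (soundInt domP c eqP neqP subP bar M I) C := by
  intro C hC
  cases τ with
  | id => exact hB _ hC
  | blsd =>
    rcases hC with (h | h) | h
    · exact hB _ h
    · exact ctx.sat_subClauses _ h
    · rcases h with h | h
      · rcases h with rfl
        exact ctx.sat_headSplit _ rfl
      · rcases h with rfl
        exact ctx.sat_eqNeqBot
  | blsp =>
    rcases hC with ((h | h) | h) | h
    · exact hB _ h
    · exact ctx.sat_subClauses _ h
    · rcases h with ⟨p, hp, rfl⟩
      exact ctx.sat_headSplit _ rfl
    · rcases h with rfl
      exact ctx.sat_eqNeqBot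
  | blud =>
    rcases hC with h | h
    · exact hB _ h
    · rcases h with h | h
      · rcases h with rfl
        exact ctx.sat_headSplit _ rfl
      · rcases h with rfl
        exact ctx.sat_eqNeqBot
  | blup =>
    rcases hC with (h | h) | h
    · exact hB _ h
    · rcases h with ⟨p, hp, rfl⟩
      exact ctx.sat_headSplit _ rfl
    · rcases h with rfl
      exact ctx.sat_eqNeqBot

theorem SoundCtx.sound_model (b : BaseTr) (τ : BlockTr) (Ps : Set (P × ℕ))
    (Fs : Set (F × ℕ)) :
    ∀ C ∈ (applyTr σ domP c eqP neqP subP bar b τ M ∪ {reflDomClause domP eqP}) ∪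
        EAX eqP Ps Fs, satClause (soundInt domP c eqP neqP subP bar M I) C := by
  intro C hC
  rcases hC with (h | h) | h
  · exact ctx.sat_block τ _ (ctx.sat_base b) _ h
  · rcases h with rfl
    exact ctx.sat_reflHead _ rfl
  · exact ctx.sat_eax Ps Fs _ h

end Soundness


/-! ### Completeness: shifting -/

theorem mem_atom_vars {a : Atom P F} {t : Term F} (ht : t ∈ a.args) {v : ℕ}
    (hv : v ∈ t.vars) : v ∈ a.vars := by
  simp only [Atom.vars, List.mem_flatMap]
  exact ⟨t, ht, hv⟩

theorem getD_isGround {ts : List (Term F)} (h : ∀ u ∈ ts, u.IsGround) (i : ℕ) {d : Term F}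
    (hd : d.IsGround) : (ts.getD i d).IsGround := by
  by_cases hi : i < ts.length
  · rw [List.getD_eq_getElem _ _ hi]
    exact h _ (List.getElem_mem hi)
  · rw [List.getD_eq_default _ _ (by omega)]
    exact hd

theorem bs_complete {I : Set (Atom P F)} {bar : P → P} {K : Set (Clause P F)}
    (hcons : ∀ pn ∈ shiftedPreds K, satClause I
      ⟨[], [⟨pn.1, rangeVars pn.2⟩, ⟨bar pn.1, rangeVars pn.2⟩]⟩)
    (him : ∀ C ∈ K, satClause I (bsClause bar C)) :
    ∀ C ∈ K, satClause I C := by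
  intro C hC g hg hb
  obtain ⟨a, ha, hin⟩ := him C hC g hg (fun a ha' => hb a (bsClause_body_sub ha'))
  rcases bsClause_heads_cases ha with h' | ⟨b, hbmem, hpf, rfl⟩
  · exact ⟨a, h', hin⟩
  · exfalso
    have hpn : (b.pred, b.args.length) ∈ shiftedPreds K := ⟨C, hC, b, hbmem, hpf, rfl⟩
    have hsubeq : (rangeVars b.args.length : List (Term F)).map
        (Term.subst (fun i => (b.args.getD i (Term.var 0)).subst g)) =
          b.args.map (Term.subst g) := by
      rw [rangeVars_subst]
      exact map_range_getD b.args (Term.var 0) (Term.subst g)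
    obtain ⟨x, hx, _⟩ := hcons _ hpn (fun i => (b.args.getD i (Term.var 0)).subst g)
      (fun i => Term.subst_isGround hg _) (by
        intro A hA
        rcases List.mem_cons.1 hA with rfl | hA'
        · show (⟨b.pred, (rangeVars b.args.length).map _⟩ : Atom P F) ∈ I
          rw [hsubeq]
          exact hb b hbmem
        · rcases List.mem_singleton.1 hA' with rfl
          show (⟨bar b.pred, (rangeVars b.args.length).map _⟩ : Atom P F) ∈ I
          rw [hsubeq]
          exact hin)
    exact absurd hx List.not_mem_nil

theorem pf_complete {I : Set (Atom P F)} {eqP : P} {K : Set (Clause P F)}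
    (hrefl : EqRefl I eqP)
    (him : ∀ C ∈ K, satClause I (pfClause eqP C)) :
    ∀ C ∈ K, satClause I C := by
  classical
  intro C hC g hg hb
  set g' : ℕ → Term F := fun v =>
    if v < C.maxVar + 1 then g v
    else ((C.body.getD (Nat.unpair (v - (C.maxVar + 1))).1 ⟨eqP, []⟩).args.getD
      (Nat.unpair (v - (C.maxVar + 1))).2 (Term.var 0)).subst g with hg'def
  have hgrd : GroundSubst g' := by
    intro v
    rw [hg'def]
    dsimp only
    split
    · exact hg v
    · exact Term.subst_isGround hg _
  have hfresh : ∀ j i (hj : j < C.body.length) (hi : i < (C.body[j]).args.length),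
      g' ((C.maxVar + 1) + Nat.pair j i) = ((C.body[j]).args[i]).subst g := by
    intro j i hj hi
    rw [hg'def]
    dsimp only
    rw [if_neg (by omega)]
    have he : (C.maxVar + 1) + Nat.pair j i - (C.maxVar + 1) = Nat.pair j i := by omega
    rw [he, Nat.unpair_pair]
    dsimp only
    rw [List.getD_eq_getElem _ _ hj, List.getD_eq_getElem _ _ hi]
  have hlow : ∀ v, v ≤ C.maxVar → g' v = g v := by
    intro v hv
    rw [hg'def]
    dsimp only
    rw [if_pos (by omega)]
  have hagree : ∀ a ∈ C.atoms, a.subst g' = a.subst g := by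
    intro a ha
    apply Atom.subst_congr
    intro v hv
    exact hlow v (le_maxVar_of_mem (mem_vars_of_atom ha hv))
  have hbody : ∀ b ∈ (pfClause eqP C).body, b.subst g' ∈ I := by
    intro b hbW
    rcases pfClause_body_cases hbW with ⟨j, hj, rfl⟩ | ⟨j, hj, hmem⟩
    · by_cases heqp : (C.body[j]).pred = eqP
      · rw [pfArgs_of_eq heqp, hagree _ (List.mem_append_right _ (List.getElem_mem hj))]
        exact hb _ (List.getElem_mem hj)
      · rw [pfArgs_of_ne heqp]
        have hsubst : (⟨(C.body[j]).pred, (C.body[j]).args.mapIdx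
            (fun i t => if t.isPF then Term.var ((C.maxVar + 1) + Nat.pair j i) else t)⟩ :
              Atom P F).subst g' = (C.body[j]).subst g := by
          simp only [Atom.subst, Atom.mk.injEq, true_and]
          apply List.ext_getElem
          · simp
          · intro i h1 h2
            have hi : i < (C.body[j]).args.length := by simpa using h2
            rw [List.getElem_map, List.getElem_map, List.getElem_mapIdx]
            by_cases hpf : ((C.body[j]).args[i]).isPF = true
            · rw [if_pos hpf, Term.subst_var]
              exact hfresh j i hj hi
            · rw [if_neg hpf]
              apply Term.subst_congr
              intro v hv
              exact hlow v (le_maxVar_of_mem (mem_vars_of_atom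
                (List.mem_append_right _ (List.getElem_mem hj))
                (mem_atom_vars (List.getElem_mem hi) hv)))
        rw [hsubst]
        exact hb _ (List.getElem_mem hj)
    · rcases mem_pfEqs hmem with ⟨hne, i, hi, hpf, rfl⟩
      rw [eqAtom_subst, Term.subst_var, hfresh j i hj hi]
      have hteq : ((C.body[j]).args[i]).subst g' = ((C.body[j]).args[i]).subst g := by
        apply Term.subst_congr
        intro v hv
        exact hlow v (le_maxVar_of_mem (mem_vars_of_atom
          (List.mem_append_right _ (List.getElem_mem hj))
          (mem_atom_vars (List.getElem_mem hi) hv)))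
      rw [hteq]
      exact hrefl _ (Term.subst_isGround hg _)
  obtain ⟨a', ha', hin⟩ := him C hC g' hgrd hbody
  rw [pfClause_heads] at ha'
  refine ⟨a', ha', ?_⟩
  rw [← hagree a' (List.mem_append_left _ ha')]
  exact hin

theorem sh_complete {I : Set (Atom P F)} {eqP : P} {bar : P → P} {M : Set (Clause P F)}
    (hrefl : EqRefl I eqP)
    (hcore : ∀ C'' ∈ sh eqP bar M, satClause I C'') :
    ∀ C ∈ M, satClause I C := by
  have hpf : ∀ C' ∈ pf eqP M, satClause I C' :=
    bs_complete (fun pn hpn => hcore _ (mem_sh_cons hpn))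
      (fun C' hC' => hcore _ (mem_sh_bs hC'))
  exact pf_complete hrefl (fun C hC => hpf _ (mem_pf_of_mem hC))

/-! ### Completeness: the collapsed interpretation -/

section CompInt

variable (σ : Sig P F) (domP : P) (c : F) (eqP : P) (J : Set (Atom P F))

/-- The collapsed interpretation used in the completeness proof. -/
noncomputable def compInt : Set (Atom P F) :=
  {A | A.IsGround ∧ (⟨A.pred, A.args.map (kol σ.funcs c)⟩ : Atom P F) ∈ J}

theorem compInt_ground : ∀ A ∈ compInt σ c J, A.IsGround := fun _ h => h.1

variable {σ domP c eqP J}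

theorem comp_core {M₀ : Set (Clause P F)}
    (hwfF : ∀ C₀ ∈ M₀, ∀ fn ∈ C₀.funcs, fn ∈ σ.funcs)
    (hRRsat : ∀ C₀ ∈ M₀, satClause J (rangeRestrictClause domP C₀))
    (hdomK : ∀ t : Term F, t.IsGround → domAtom domP (kol σ.funcs c t) ∈ J) :
    ∀ C₀ ∈ M₀, satClause (compInt σ c J) C₀ := by
  intro C₀ hC₀ g hg hb
  have hb' : ∀ a ∈ (rangeRestrictClause domP C₀).body,
      a.subst (fun v => kol σ.funcs c (g v)) ∈ J := by
    intro a ha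
    rcases rangeRestrictClause_body_cases ha with ha' | ⟨v, rfl⟩
    · have hmem := hb a ha'
      have hfuncs : ∀ fn ∈ a.funcs, fn ∈ σ.funcs := fun fn hfn =>
        hwfF C₀ hC₀ fn (mem_funcs_of_atom (List.mem_append_right _ ha') hfn)
      rw [← kAtom_subst hfuncs]
      exact hmem.2
    · simpa using hdomK (g v) (hg v)
  obtain ⟨a', ha', hin⟩ := hRRsat C₀ hC₀ _ (groundSubst_kol hg) hb'
  rw [rangeRestrictClause_heads] at ha'
  refine ⟨a', ha', Atom.subst_isGround hg a', ?_⟩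
  have hfuncs : ∀ fn ∈ a'.funcs, fn ∈ σ.funcs := fun fn hfn =>
    hwfF C₀ hC₀ fn (mem_funcs_of_atom (List.mem_append_left _ ha') hfn)
  show kAtom σ.funcs c (a'.subst g) ∈ J
  rw [kAtom_subst hfuncs]
  exact hin

theorem domK_of_step4 {N : Set (Clause P F)} (hsat : ∀ C ∈ N, satClause J C)
    (hstep4 : (⟨[domAtom domP (Term.var 0)], [⟨eqP, rangeVars 2⟩]⟩ : Clause P F) ∈ N)
    (hR : EqRefl J eqP) :
    ∀ t : Term F, t.IsGround → domAtom domP t ∈ J := by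
  intro t ht
  obtain ⟨a, ha, hin⟩ := hsat _ hstep4 (fun _ => t) (fun _ => ht) (by
    intro a ha
    rcases List.mem_singleton.1 ha with rfl
    have he : (⟨eqP, rangeVars 2⟩ : Atom P F).subst (fun _ => t) = eqAtom eqP t t := by
      simp [Atom.subst, rangeVars, eqAtom, List.range_succ]
    rw [he]
    exact hR t ht)
  rcases List.mem_singleton.1 ha with rfl
  simpa using hin

theorem rr_domc_eq : rangeRestrictClause domP (domcClause domP c) = domcClause domP c := by
  simp [rangeRestrictClause, domcClause, Clause.headVars, Clause.bodyVars, domAtom,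
    Atom.vars, cTerm]

theorem domK_of_crr {N : Set (Clause P F)} {M₀ : Set (Clause P F)}
    (hsat : ∀ C ∈ N, satClause J C) (hsub : crr σ domP c M₀ ⊆ N) :
    ∀ t : Term F, t.IsGround → domAtom domP (kol σ.funcs c t) ∈ J := by
  classical
  have hdomc : domAtom domP (cTerm c) ∈ J := by
    obtain ⟨a, ha, hin⟩ := hsat _ (hsub mem_crr_domc) (fun _ => cTerm c)
      (fun _ => by simp [cTerm, Term.IsGround]) (by
        intro a ha
        rw [rr_domc_eq] at ha
        simp [domcClause] at ha)
    rcases List.mem_singleton.1 ha with rfl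
    simpa [cTerm] using hin
  intro t
  induction t using Term.my_ind with
  | hv v => intro h; exact absurd h (by simp [Term.IsGround])
  | ha f ts ih =>
    intro h
    rw [Term.isGround_app] at h
    by_cases hf : (f, ts.length) ∈ σ.funcs
    · rw [kol_app_pos hf]
      obtain ⟨a, ha, hin⟩ := hsat _ (hsub (mem_crr_step3 (fn := (f, ts.length)) hf))
        (fun i => kol σ.funcs c (ts.getD i (Term.app c [])))
        (fun i => kol_isGround (getD_isGround h i (by simp [Term.IsGround]))) (by
          intro a ha
          rcases List.mem_map.1 ha with ⟨i, hir, rfl⟩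
          have hi : i < ts.length := List.mem_range.1 hir
          rw [domAtom_subst, Term.subst_var]
          rw [List.getD_eq_getElem _ _ hi]
          exact ih _ (List.getElem_mem hi) (h _ (List.getElem_mem hi)))
      rcases List.mem_singleton.1 ha with rfl
      rw [domAtom_subst, Term.subst_app] at hin
      have he : (rangeVars ts.length : List (Term F)).map
          (Term.subst (fun i => kol σ.funcs c (ts.getD i (Term.app c [])))) =
            ts.map (kol σ.funcs c) := by
        rw [rangeVars_subst]
        exact map_range_getD ts (Term.app c []) (kol σ.funcs c)
      rw [he] at hin
      exact hin
    · rw [kol_app_neg hf]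
      exact hdomc

theorem comp_eqRefl (hR : EqRefl J eqP) : EqRefl (compInt σ c J) eqP := by
  intro s hs
  exact ⟨eqAtom_isGround hs hs, by simpa [eqAtom] using hR _ (kol_isGround hs)⟩

theorem comp_eax {Mset : Set (Clause P F)}
    (hR : EqRefl J eqP) (hS : EqSym J eqP) (hT : EqTrans J eqP)
    (hFCJ : ∀ fn ∈ funcsOf Mset, FCong J eqP fn)
    (hPCJ : ∀ pn ∈ predsOf Mset, PCong J eqP pn)
    (hwfF : ∀ fn ∈ funcsOf Mset, fn ∈ σ.funcs) :
    ∀ C ∈ EAX eqP (predsOf Mset) (funcsOf Mset), satClause (compInt σ c J) C := by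
  apply eax_satisfy
  · exact comp_eqRefl hR
  · intro s t hs ht h
    exact ⟨eqAtom_isGround ht hs, by
      simpa [eqAtom] using hS _ _ (kol_isGround hs) (kol_isGround ht)
        (by simpa [eqAtom] using h.2)⟩
  · intro s t u hs ht hu h1 h2
    exact ⟨eqAtom_isGround hs hu, by
      simpa [eqAtom] using hT _ _ _ (kol_isGround hs) (kol_isGround ht) (kol_isGround hu)
        (by simpa [eqAtom] using h1.2) (by simpa [eqAtom] using h2.2)⟩
  · intro fn hfn s t hs ht hst
    have hg1 : (Term.app fn.1 ((List.range fn.2).map s)).IsGround := by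
      rw [Term.isGround_app]
      intro u hu
      rcases List.mem_map.1 hu with ⟨i, _, rfl⟩
      exact hs i
    have hg2 : (Term.app fn.1 ((List.range fn.2).map t)).IsGround := by
      rw [Term.isGround_app]
      intro u hu
      rcases List.mem_map.1 hu with ⟨i, _, rfl⟩
      exact ht i
    refine ⟨eqAtom_isGround hg1 hg2, ?_⟩
    have hIcong := hFCJ fn hfn (fun i => kol σ.funcs c (s i))
      (fun i => kol σ.funcs c (t i)) (fun i => kol_isGround (hs i))
      (fun i => kol_isGround (ht i))
      (fun i hi => by simpa [eqAtom] using (hst i hi).2)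
    have e1 : kol σ.funcs c (Term.app fn.1 ((List.range fn.2).map s)) =
        Term.app fn.1 ((List.range fn.2).map (fun i => kol σ.funcs c (s i))) := by
      rw [kol_app_pos (by simpa using hwfF fn hfn), List.map_map]
      rfl
    have e2 : kol σ.funcs c (Term.app fn.1 ((List.range fn.2).map t)) =
        Term.app fn.1 ((List.range fn.2).map (fun i => kol σ.funcs c (t i))) := by
      rw [kol_app_pos (by simpa using hwfF fn hfn), List.map_map]
      rfl
    simp only [eqAtom, List.map_cons, List.map_nil]
    rw [e1, e2]
    exact hIcong
  · intro pn hpn s t hs ht hst hbase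
    have hgt : (⟨pn.1, (List.range pn.2).map t⟩ : Atom P F).IsGround := by
      apply atom_mk_isGround
      intro u hu
      rcases List.mem_map.1 hu with ⟨i, _, rfl⟩
      exact ht i
    refine ⟨hgt, ?_⟩
    have hmapk : ∀ (u : ℕ → Term F),
        ((List.range pn.2).map u).map (kol σ.funcs c) =
          (List.range pn.2).map (fun i => kol σ.funcs c (u i)) := by
      intro u
      rw [List.map_map]
      rfl
    have hbI : (⟨pn.1, (List.range pn.2).map (fun i => kol σ.funcs c (s i))⟩ :
        Atom P F) ∈ J := by
      rw [← hmapk s]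
      exact hbase.2
    have hconc := hPCJ pn hpn (fun i => kol σ.funcs c (s i)) (fun i => kol σ.funcs c (t i))
      (fun i => kol_isGround (hs i)) (fun i => kol_isGround (ht i))
      (fun i hi => by simpa [eqAtom] using (hst i hi).2) hbI
    rw [hmapk t]
    exact hconc

end CompInt

/-! ### Signature inclusion lemmas -/

theorem preds_rrClause {domP : P} {C : Clause P F} {pn : P × ℕ} (h : pn ∈ C.preds) :
    pn ∈ (rangeRestrictClause domP C).preds := by
  rcases List.mem_map.1 h with ⟨a, ha, rfl⟩
  exact mem_preds_of_atom (mem_atoms_rangeRestrictClause ha)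

theorem funcs_rrClause {domP : P} {C : Clause P F} {fn : F × ℕ} (h : fn ∈ C.funcs) :
    fn ∈ (rangeRestrictClause domP C).funcs := by
  rcases List.mem_flatMap.1 h with ⟨a, ha, hfn⟩
  exact mem_funcs_of_atom (mem_atoms_rangeRestrictClause ha) hfn

theorem preds_in_sh {eqP : P} {bar : P → P} {M : Set (Clause P F)} {C : Clause P F}
    (hC : C ∈ M) {pn : P × ℕ} (h : pn ∈ C.preds) :
    ∃ C'' ∈ sh eqP bar M, pn ∈ C''.preds := by
  rcases List.mem_map.1 h with ⟨a, ha, rfl⟩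
  rcases List.mem_append.1 ha with hh | hbmem
  · exact ⟨bsClause bar (pfClause eqP C), mem_sh_bs (mem_pf_of_mem hC),
      mem_preds_of_atom (List.mem_append_left _
        (mem_bsClause_heads_left (bar := bar) (C := pfClause eqP C) hh))⟩
  · obtain ⟨j, hj, rfl⟩ := List.mem_iff_getElem.1 hbmem
    have hbW := pfClause_body_mem1 (eqP := eqP) hj
    have hpred : ((pfArgs eqP (C.maxVar + 1) j (C.body[j])).pred,
        (pfArgs eqP (C.maxVar + 1) j (C.body[j])).args.length) =
        ((C.body[j]).pred, (C.body[j]).args.length) := by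
      rw [pfArgs_pred, pfArgs_len]
    by_cases hpf : (pfArgs eqP (C.maxVar + 1) j (C.body[j])).hasPF = true
    · have hpn : ((pfArgs eqP (C.maxVar + 1) j (C.body[j])).pred,
          (pfArgs eqP (C.maxVar + 1) j (C.body[j])).args.length) ∈
            shiftedPreds (pf eqP M) :=
        ⟨_, mem_pf_of_mem hC, _, hbW, hpf, rfl⟩
      refine ⟨_, mem_sh_cons (bar := bar) hpn, ?_⟩
      rw [← hpred]
      have hm := mem_preds_of_atom
        (C := (⟨[], [⟨(pfArgs eqP (C.maxVar + 1) j (C.body[j])).pred,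
            rangeVars (pfArgs eqP (C.maxVar + 1) j (C.body[j])).args.length⟩,
          ⟨bar (pfArgs eqP (C.maxVar + 1) j (C.body[j])).pred,
            rangeVars (pfArgs eqP (C.maxVar + 1) j (C.body[j])).args.length⟩]⟩ : Clause P F))
        (a := (⟨(pfArgs eqP (C.maxVar + 1) j (C.body[j])).pred,
          rangeVars (pfArgs eqP (C.maxVar + 1) j (C.body[j])).args.length⟩ : Atom P F))
        (List.mem_append_right _ (List.mem_cons_self))
      simpa [rangeVars] using hm
    · refine ⟨bsClause bar (pfClause eqP C), mem_sh_bs (mem_pf_of_mem hC), ?_⟩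
      rw [← hpred]
      exact mem_preds_of_atom (List.mem_append_right _
        (mem_bsClause_body hbW (by simpa using hpf)))

theorem funcs_in_sh {eqP : P} {bar : P → P} {C : Clause P F} {fn : F × ℕ}
    (h : fn ∈ C.funcs) : fn ∈ (bsClause bar (pfClause eqP C)).funcs := by
  rcases List.mem_flatMap.1 h with ⟨a, ha, hafn⟩
  rcases List.mem_append.1 ha with hh | hbmem
  · exact mem_funcs_of_atom (List.mem_append_left _
      (mem_bsClause_heads_left (bar := bar) (C := pfClause eqP C) hh)) hafn
  · obtain ⟨j, hj, rfl⟩ := List.mem_iff_getElem.1 hbmem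
    rcases List.mem_flatMap.1 hafn with ⟨t, ht, htfn⟩
    obtain ⟨i, hi, rfl⟩ := List.mem_iff_getElem.1 ht
    by_cases heqp : (C.body[j]).pred = eqP
    · have hbW := pfClause_body_mem1 (eqP := eqP) hj
      rw [pfArgs_of_eq heqp] at hbW
      by_cases hpf : (C.body[j]).hasPF = true
      · exact mem_funcs_of_atom (List.mem_append_left _
          (mem_bsClause_heads_right hbW hpf)) hafn
      · exact mem_funcs_of_atom (List.mem_append_right _
          (mem_bsClause_body hbW (by simpa using hpf))) hafn
    · by_cases hpf : ((C.body[j]).args[i]).isPF = true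
      · have he := pfEqs_mem (b := C.maxVar + 1) (j := j) hi heqp hpf
        have hbW := pfClause_body_mem2 hj he
        have hhaspf : (eqAtom eqP ((C.body[j]).args[i])
            (Term.var ((C.maxVar + 1) + Nat.pair j i))).hasPF = true := by
          simp only [Atom.hasPF, eqAtom, List.any_cons, Bool.or_eq_true]
          exact Or.inl hpf
        refine mem_funcs_of_atom (List.mem_append_left _
          (mem_bsClause_heads_right hbW hhaspf)) ?_
        exact mem_atom_funcs (List.mem_cons_self) htfn
      · have hbW := pfClause_body_mem1 (eqP := eqP) hj
        have hpffalse := pfArgs_hasPF heqp (C.maxVar + 1) j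
        refine mem_funcs_of_atom (List.mem_append_right _
          (mem_bsClause_body hbW hpffalse)) ?_
        rw [pfArgs_of_ne heqp]
        refine mem_atom_funcs ?_ htfn
        refine List.mem_iff_getElem.2 ⟨i, by simpa using hi, ?_⟩
        rw [List.getElem_mapIdx, if_neg hpf]

theorem funcs_bsClause_sub {bar : P → P} {C' : Clause P F} {fn : F × ℕ}
    (h : fn ∈ (bsClause bar C').funcs) : fn ∈ C'.funcs := by
  rcases List.mem_flatMap.1 h with ⟨a, ha, hafn⟩
  rcases List.mem_append.1 ha with hh | hbm
  · rcases bsClause_heads_cases hh with h' | ⟨b, hb, _, rfl⟩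
    · exact mem_funcs_of_atom (List.mem_append_left _ h') hafn
    · exact mem_funcs_of_atom (List.mem_append_right _ hb) hafn
  · exact mem_funcs_of_atom (List.mem_append_right _ (bsClause_body_sub hbm)) hafn

theorem funcs_pfClause_sub {eqP : P} {C : Clause P F} {fn : F × ℕ}
    (h : fn ∈ (pfClause eqP C).funcs) : fn ∈ C.funcs := by
  rcases List.mem_flatMap.1 h with ⟨a, ha, hafn⟩
  rcases List.mem_append.1 ha with hh | hbm
  · exact mem_funcs_of_atom (List.mem_append_left C.body hh) hafn
  · rcases pfClause_body_cases hbm with ⟨j, hj, rfl⟩ | ⟨j, hj, hmem⟩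
    · by_cases heqp : (C.body[j]).pred = eqP
      · rw [pfArgs_of_eq heqp] at hafn
        exact mem_funcs_of_atom (List.mem_append_right _ (List.getElem_mem hj)) hafn
      · rw [pfArgs_of_ne heqp] at hafn
        rcases List.mem_flatMap.1 hafn with ⟨t, ht, htfn⟩
        obtain ⟨i, hi, hget⟩ := List.mem_iff_getElem.1 ht
        rw [List.getElem_mapIdx] at hget
        have hi' : i < (C.body[j]).args.length := by simpa using hi
        have ht' : t ∈ (C.body[j]).args := by
          by_cases hpf : ((C.body[j]).args[i]).isPF = true
          · rw [if_pos hpf] at hget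
            rw [← hget] at htfn
            simp at htfn
          · rw [if_neg hpf] at hget
            rw [← hget]
            exact List.getElem_mem hi'
        exact mem_funcs_of_atom (List.mem_append_right _ (List.getElem_mem hj))
          (mem_atom_funcs ht' htfn)
    · rcases mem_pfEqs hmem with ⟨hne, i, hi, hpf, rfl⟩
      rcases List.mem_flatMap.1 hafn with ⟨t, ht, htfn⟩
      rcases List.mem_cons.1 ht with rfl | ht'
      · exact mem_funcs_of_atom (List.mem_append_right _ (List.getElem_mem hj))
          (mem_atom_funcs (List.getElem_mem hi) htfn)
      · rcases List.mem_singleton.1 ht' with rfl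
        simp at htfn

theorem sh_wfF {σ : Sig P F} {eqP : P} {bar : P → P} {M : Set (Clause P F)}
    (hwf : WFSet σ M) :
    ∀ C'' ∈ sh eqP bar M, ∀ fn ∈ C''.funcs, fn ∈ σ.funcs := by
  intro C'' hC'' fn hfn
  rcases sh_cases hC'' with ⟨C₀, hC₀, rfl⟩ | h | ⟨pn, hpn, rfl⟩
  · exact (hwf C₀ hC₀).2 fn (funcs_pfClause_sub (funcs_bsClause_sub hfn))
  · rcases h with rfl
    simp [Clause.funcs, Clause.atoms, reflClause, Atom.funcs, eqAtom] at hfn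
  · exfalso
    rcases List.mem_flatMap.1 hfn with ⟨a, ha, hfa⟩
    simp only [Clause.atoms, List.nil_append, List.mem_cons, List.mem_singleton,
      List.not_mem_nil, or_false] at ha
    rcases ha with rfl | rfl <;>
      · simp only [Atom.funcs, rangeVars, List.mem_flatMap, List.mem_map] at hfa
        rcases hfa with ⟨t, ⟨i, _, rfl⟩, hft⟩
        simp at hft

theorem predsOf_mono {M₁ M₂ : Set (Clause P F)} (h : M₁ ⊆ M₂) :
    predsOf M₁ ⊆ predsOf M₂ := by
  rintro pn ⟨C, hC, hp⟩
  exact ⟨C, h hC, hp⟩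

theorem funcsOf_mono {M₁ M₂ : Set (Clause P F)} (h : M₁ ⊆ M₂) :
    funcsOf M₁ ⊆ funcsOf M₂ := by
  rintro fn ⟨C, hC, hf⟩
  exact ⟨C, h hC, hf⟩

theorem preds_M_in_base (σ : Sig P F) (domP : P) (c : F) (eqP : P) (bar : P → P)
    (M : Set (Clause P F)) (b : BaseTr) :
    predsOf M ⊆ predsOf (applyBase σ domP c eqP bar b M) := by
  rintro pn ⟨C, hC, hp⟩
  cases b with
  | rr => exact ⟨rangeRestrictClause domP C, mem_rr_of_mem hC, preds_rrClause hp⟩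
  | crr => exact ⟨rangeRestrictClause domP C, mem_crr_of_mem hC, preds_rrClause hp⟩
  | shrr =>
    obtain ⟨C'', hC'', hp'⟩ := preds_in_sh (bar := bar) hC hp
    exact ⟨rangeRestrictClause domP C'', mem_rr_of_mem hC'', preds_rrClause hp'⟩
  | shcrr =>
    obtain ⟨C'', hC'', hp'⟩ := preds_in_sh (bar := bar) hC hp
    exact ⟨rangeRestrictClause domP C'', mem_crr_of_mem hC'', preds_rrClause hp'⟩

theorem funcs_M_in_base (σ : Sig P F) (domP : P) (c : F) (eqP : P) (bar : P → P)
    (M : Set (Clause P F)) (b : BaseTr) :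
    funcsOf M ⊆ funcsOf (applyBase σ domP c eqP bar b M) := by
  rintro fn ⟨C, hC, hf⟩
  cases b with
  | rr => exact ⟨rangeRestrictClause domP C, mem_rr_of_mem hC, funcs_rrClause hf⟩
  | crr => exact ⟨rangeRestrictClause domP C, mem_crr_of_mem hC, funcs_rrClause hf⟩
  | shrr =>
    exact ⟨rangeRestrictClause domP (bsClause bar (pfClause eqP C)),
      mem_rr_of_mem (mem_sh_bs (mem_pf_of_mem hC)), funcs_rrClause (funcs_in_sh hf)⟩
  | shcrr =>
    exact ⟨rangeRestrictClause domP (bsClause bar (pfClause eqP C)),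
      mem_crr_of_mem (mem_sh_bs (mem_pf_of_mem hC)), funcs_rrClause (funcs_in_sh hf)⟩

end Aux

/-- **Completeness (and soundness) of the combined transformations w.r.t.
E-interpretations** (Theorem 1 (iii)): for every clause set `M` and every transformation
`tr` in
`{rr, sh∘rr, crr, sh∘crr} ∪ {π∘τ : π ∈ {rr, sh∘rr, crr, sh∘crr}, τ ∈ {blsd, blsp, blud, blup}}`
(composition read left-to-right), `tr(M) ∪ {x ≈ x ← dom(x)}` is E-satisfiable if and only
if `M` is E-satisfiable. -/
theorem combined_E_completeness_soundness {P F : Type} [DecidableEq P] [DecidableEq F]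
    (σ : Sig P F) (domP : P) (c : F) (eqP neqP subP : P) (bar : P → P)
    (b : BaseTr) (τ : BlockTr) (M : Set (Clause P F))
    (hfin : M.Finite) (hwf : WFSet σ M)
    (hdomFresh : ∀ n, (domP, n) ∉ σ.preds)
    (heq : (eqP, 2) ∈ σ.preds)
    (hneqFresh : ∀ n, (neqP, n) ∉ σ.preds) (hneqDom : neqP ≠ domP)
    (hsubFresh : ∀ n, (subP, n) ∉ σ.preds) (hsubDom : subP ≠ domP) (hsubNeq : subP ≠ neqP)
    (hbarInj : Function.Injective bar)
    (hbarFresh : ∀ p n, (bar p, n) ∉ σ.preds)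
    (hbarNew : ∀ p, bar p ≠ p ∧ bar p ≠ domP ∧ bar p ≠ neqP ∧ bar p ≠ subP) :
    (ESatisfiable eqP
        (applyTr σ domP c eqP neqP subP bar b τ M ∪ {reflDomClause domP eqP}) →
      ESatisfiable eqP M) ∧
    (ESatisfiable eqP M →
      ESatisfiable eqP
        (applyTr σ domP c eqP neqP subP bar b τ M ∪ {reflDomClause domP eqP})) := by
  classical
  constructor
  · -- completeness
    rintro ⟨J, hJg, hJ⟩
    have hNsat : ∀ C ∈ applyTr σ domP c eqP neqP subP bar b τ M ∪ {reflDomClause domP eqP},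
        satClause J C := fun C hC => hJ C (Or.inl hC)
    obtain ⟨hR, hS, hT, hFC, hPC⟩ := eax_extract (fun C hC => hJ C (Or.inr hC))
    have hbase_sub : applyBase σ domP c eqP bar b M ⊆
        applyTr σ domP c eqP neqP subP bar b τ M ∪ {reflDomClause domP eqP} := by
      intro C hC
      exact Or.inl (applyBlock_supset σ domP eqP neqP subP τ _ hC)
    have hFCJ : ∀ fn ∈ funcsOf M, FCong J eqP fn := fun fn hfn =>
      hFC fn (funcsOf_mono hbase_sub (funcs_M_in_base σ domP c eqP bar M b hfn))
    have hPCJ : ∀ pn ∈ predsOf M, PCong J eqP pn := fun pn hpn =>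
      hPC pn (predsOf_mono hbase_sub (preds_M_in_base σ domP c eqP bar M b hpn))
    refine ⟨compInt σ c J, compInt_ground σ c J, ?_⟩
    intro C hC
    rcases hC with hCM | hCE
    · cases b with
      | rr =>
        have hsub : rr σ domP c M ⊆
            applyTr σ domP c eqP neqP subP bar BaseTr.rr τ M ∪ {reflDomClause domP eqP} :=
          fun C' h => hbase_sub h
        have hdomall := domK_of_step4 hNsat
          (hsub (mem_rr_step4 heq (by norm_num : (0:ℕ) < (eqP, 2).2))) hR
        exact comp_core (fun C₀ h₀ fn hfn => (hwf C₀ h₀).2 fn hfn)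
          (fun C₀ h₀ => hNsat _ (hsub (mem_rr_of_mem h₀)))
          (fun t ht => hdomall _ (kol_isGround ht)) C hCM
      | crr =>
        have hsub : crr σ domP c M ⊆
            applyTr σ domP c eqP neqP subP bar BaseTr.crr τ M ∪ {reflDomClause domP eqP} :=
          fun C' h => hbase_sub h
        exact comp_core (fun C₀ h₀ fn hfn => (hwf C₀ h₀).2 fn hfn)
          (fun C₀ h₀ => hNsat _ (hsub (mem_crr_of_mem h₀)))
          (domK_of_crr hNsat hsub) C hCM
      | shrr =>
        have hsub : rr σ domP c (sh eqP bar M) ⊆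
            applyTr σ domP c eqP neqP subP bar BaseTr.shrr τ M ∪ {reflDomClause domP eqP} :=
          fun C' h => hbase_sub h
        have hdomall := domK_of_step4 hNsat
          (hsub (mem_rr_step4 heq (by norm_num : (0:ℕ) < (eqP, 2).2))) hR
        have hcore := comp_core (σ := σ) (domP := domP) (c := c) (J := J) (sh_wfF hwf)
          (fun C₀ h₀ => hNsat _ (hsub (mem_rr_of_mem h₀)))
          (fun t ht => hdomall (kol σ.funcs c t) (kol_isGround ht))
        exact sh_complete (comp_eqRefl hR) hcore C hCM
      | shcrr =>
        have hsub : crr σ domP c (sh eqP bar M) ⊆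
            applyTr σ domP c eqP neqP subP bar BaseTr.shcrr τ M ∪ {reflDomClause domP eqP} :=
          fun C' h => hbase_sub h
        have hcore := comp_core (σ := σ) (domP := domP) (c := c) (J := J) (sh_wfF hwf)
          (fun C₀ h₀ => hNsat _ (hsub (mem_crr_of_mem h₀)))
          (domK_of_crr hNsat hsub)
        exact sh_complete (comp_eqRefl hR) hcore C hCM
    · exact comp_eax hR hS hT hFCJ hPCJ
        (fun fn hfn => by
          rcases hfn with ⟨C', hC', h⟩
          exact (hwf C' hC').2 _ h) C hCE
  · -- soundness
    rintro ⟨I, hIg, hI⟩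
    obtain ⟨hR, hS, hT, hFCI, hPCI⟩ := eax_extract (fun C hC => hI C (Or.inr hC))
    have hMI : ∀ C ∈ M, satClause I C := fun C hC => hI C (Or.inl hC)
    have ctx : SoundCtx σ domP c eqP neqP subP bar M I :=
      ⟨hwf, hdomFresh, heq, hneqFresh, hneqDom, hsubFresh, hsubDom, hsubNeq, hbarInj,
        hbarFresh, hbarNew, hR, hS, hT, hFCI, hPCI, hMI⟩
    exact ⟨soundInt domP c eqP neqP subP bar M I,
      soundInt_ground domP c eqP neqP subP bar M I,
      ctx.sound_model b τ _ _⟩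

end BUMG
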